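/- arXiv:2501.09202 — 10 statements merged into one kernel-verified Lean document; each statement's English description precedes it below -/
import Mathlib

section
/- If 0 < a < b, then (2/π)(1 - a/b) ≤ sup_{t > 0} |sin(a t)/(a t) - sin(b t)/(b t)|. -/
theorem stmt_0 (a b : ℝ) (ha : 0 < a) (hab : a < b) :
    (2 / Real.pi) * (1 - a / b) ≤
      sSup {x : ℝ | ∃ t : ℝ, 0 < t ∧
        x = |Real.sin (a * t) / (a * t) - Real.sin (b * t) / (b * t)|} := by
  have hpi := Real.pi_pos
  have hb : 0 < b := ha.trans hab
  set t : ℝ := Real.pi / b with ht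
  have htpos : 0 < t := by positivity
  have hbt : b * t = Real.pi := by rw [ht]; field_simp [hb.ne']
  set x : ℝ := a * t with hx
  have hx0 : 0 < x := by positivity
  have hxpi : x < Real.pi := by
    rw [← hbt]; exact mul_lt_mul_of_pos_right hab htpos
  have habx : a / b = x / Real.pi := by
    rw [hx, ht]; field_simp
  -- key inequality: (2/π)(1 - x/π) ≤ sin x / x
  have key : (2 / Real.pi) * (1 - x / Real.pi) ≤ Real.sin x / x := by
    rw [le_div_iff₀ hx0]
    have hrw : 2 / Real.pi * (1 - x / Real.pi) * x = 2 * x * (Real.pi - x) / Real.pi ^ 2 := by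
      field_simp
    rw [hrw, div_le_iff₀ (by positivity)]
    rcases le_or_gt x (Real.pi / 2) with h | h
    · have h1 := Real.mul_le_sin hx0.le h
      have h2 : 2 * x ≤ Real.pi * Real.sin x := by
        rw [← div_le_iff₀' hpi]
        calc 2 * x / Real.pi = 2 / Real.pi * x := by ring
        _ ≤ _ := h1
      nlinarith [mul_le_mul_of_nonneg_left h2 hpi.le, sq_nonneg x]
    · have h1 := Real.mul_le_sin (x := Real.pi - x) (by linarith) (by linarith)
      rw [Real.sin_pi_sub] at h1
      have h2 : 2 * (Real.pi - x) ≤ Real.pi * Real.sin x := by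
        rw [← div_le_iff₀' hpi]
        calc 2 * (Real.pi - x) / Real.pi = 2 / Real.pi * (Real.pi - x) := by ring
        _ ≤ _ := h1
      nlinarith [mul_le_mul_of_nonneg_left h2 hpi.le]
  -- the element at t = π / b
  have hmem : Real.sin x / x ∈ {y : ℝ | ∃ t : ℝ, 0 < t ∧
      y = |Real.sin (a * t) / (a * t) - Real.sin (b * t) / (b * t)|} := by
    refine ⟨t, htpos, ?_⟩
    rw [hbt, Real.sin_pi, zero_div, sub_zero, ← hx,
      abs_of_nonneg (div_nonneg (Real.sin_nonneg_of_nonneg_of_le_pi hx0.le hxpi.le) hx0.le)]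
  have hbdd : BddAbove {y : ℝ | ∃ t : ℝ, 0 < t ∧
      y = |Real.sin (a * t) / (a * t) - Real.sin (b * t) / (b * t)|} := by
    refine ⟨2, fun y hy => ?_⟩
    obtain ⟨s, hs, rfl⟩ := hy
    have h1 : ∀ u : ℝ, |Real.sin u / u| ≤ 1 := by
      intro u
      rcases eq_or_ne u 0 with rfl | hu
      · simp
      · rw [abs_div, div_le_one (abs_pos.2 hu)]
        exact Real.abs_sin_le_abs
    calc |Real.sin (a * s) / (a * s) - Real.sin (b * s) / (b * s)|
        ≤ |Real.sin (a * s) / (a * s)| + |Real.sin (b * s) / (b * s)| := abs_sub _ _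
      _ ≤ 1 + 1 := add_le_add (h1 _) (h1 _)
      _ = 2 := by norm_num
  calc (2 / Real.pi) * (1 - a / b) = (2 / Real.pi) * (1 - x / Real.pi) := by rw [habx]
    _ ≤ Real.sin x / x := key
    _ ≤ _ := le_csSup hbdd hmem
end

section
/- If (n_k) is a non-decreasing sequence of positive integers (1 ≤ n_1 ≤ n_2 ≤ ...) with n_k → ∞, then ∑_{k=1}^∞ (1 - n_k/n_{k+1}) = ∞. -/
open Filter in
theorem stmt_2 (n : ℕ → ℕ) (hpos : ∀ k, 1 ≤ n k)
    (hmono : ∀ k, n k ≤ n (k + 1))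
    (hlim : Tendsto n atTop atTop) :
    Tendsto (fun M => ∑ k ∈ Finset.range M, (1 - (n k : ℝ) / (n (k + 1) : ℝ)))
      atTop atTop := by
  have hm : Monotone n := monotone_nat_of_le_succ hmono
  set S : ℕ → ℝ := fun M => ∑ k ∈ Finset.range M, (1 - (n k : ℝ) / (n (k + 1) : ℝ)) with hSdef
  have hposR : ∀ k, (0 : ℝ) < n k := fun k => by exact_mod_cast Nat.lt_of_lt_of_le Nat.zero_lt_one (hpos k)
  have hterm : ∀ k, (0 : ℝ) ≤ 1 - (n k : ℝ) / (n (k + 1) : ℝ) := by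
    intro k
    have : (n k : ℝ) / (n (k + 1) : ℝ) ≤ 1 :=
      div_le_one_of_le₀ (by exact_mod_cast hmono k) (le_of_lt (hposR (k + 1)))
    linarith
  have hSmono : Monotone S := by
    apply monotone_nat_of_le_succ
    intro M
    simp only [hSdef, Finset.sum_range_succ]
    linarith [hterm M]
  -- key bound : S m - S k ≥ 1 - n k / n m for k ≤ m
  have key : ∀ k m, k ≤ m → 1 - (n k : ℝ) / (n m : ℝ) ≤ S m - S k := by
    intro k m hkm
    have hsplit : S m - S k = ∑ j ∈ Finset.Ico k m, (1 - (n j : ℝ) / (n (j + 1) : ℝ)) := by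
      rw [hSdef, Finset.sum_Ico_eq_sub _ hkm]
    rw [hsplit]
    have hbound : ∀ j ∈ Finset.Ico k m,
        ((n (j + 1) : ℝ) - n j) / (n m : ℝ) ≤ 1 - (n j : ℝ) / (n (j + 1) : ℝ) := by
      intro j hj
      rw [Finset.mem_Ico] at hj
      have hjm : n (j + 1) ≤ n m := hm hj.2
      have h1 : (1 : ℝ) - (n j : ℝ) / (n (j + 1) : ℝ) = ((n (j + 1) : ℝ) - n j) / (n (j + 1) : ℝ) := by
        rw [sub_div, div_self (hposR (j + 1)).ne']
      rw [h1]
      apply div_le_div_of_nonneg_left _ (hposR (j + 1)) _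
      · have := hmono j; have : (n j : ℝ) ≤ n (j + 1) := by exact_mod_cast this
        linarith
      · exact_mod_cast hjm
    calc 1 - (n k : ℝ) / (n m : ℝ)
        = ∑ j ∈ Finset.Ico k m, ((n (j + 1) : ℝ) - n j) / (n m : ℝ) := by
          rw [← Finset.sum_div, Finset.sum_Ico_eq_sub _ hkm,
            Finset.sum_range_sub (fun i => (n i : ℝ)), Finset.sum_range_sub (fun i => (n i : ℝ))]
          rw [sub_sub_sub_cancel_right, sub_div, div_self (hposR m).ne']
      _ ≤ ∑ j ∈ Finset.Ico k m, (1 - (n j : ℝ) / (n (j + 1) : ℝ)) := Finset.sum_le_sum hbound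
  -- step : from any k we can gain 1/2
  have step : ∀ k, ∃ m, k ≤ m ∧ S k + 1 / 2 ≤ S m := by
    intro k
    obtain ⟨m, hm1, hm2⟩ :=
      ((hlim.eventually_ge_atTop (2 * n k)).and (eventually_ge_atTop k)).exists
    refine ⟨m, hm2, ?_⟩
    have h2 : (n k : ℝ) / (n m : ℝ) ≤ 1 / 2 := by
      rw [div_le_div_iff₀ (hposR m) (by norm_num)]
      have : (2 * n k : ℝ) ≤ n m := by exact_mod_cast hm1
      linarith
    have := key k m hm2
    linarith
  -- unboundedness
  have unb : ∀ j : ℕ, ∃ M, (j : ℝ) / 2 ≤ S M := by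
    intro j
    induction j with
    | zero => exact ⟨0, by simp [hSdef]⟩
    | succ j ih =>
        obtain ⟨M, hM⟩ := ih
        obtain ⟨m, _, hm2⟩ := step M
        refine ⟨m, ?_⟩
        push_cast
        linarith
  rw [tendsto_atTop_atTop]
  intro C
  obtain ⟨j, hj⟩ := exists_nat_ge (2 * C)
  obtain ⟨M, hM⟩ := unb j
  refine ⟨M, fun m hMm => ?_⟩
  have := hSmono hMm
  have : C ≤ (j : ℝ) / 2 := by linarith
  show C ≤ S m
  linarith [hSmono hMm]
end

section
/- For positive integers n < m, one has (2/π)(1 - n/m) ≤ sup over γ on the unit circle of |(1/n)∑_{k=1}^n γ^k − (1/m)∑_{k=1}^m γ^k|. -/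
open Finset Complex

lemma aux_sum_Icc (γ : ℂ) (hγ1 : γ ≠ 1) (j : ℕ) :
    ∑ k ∈ Finset.Icc 1 j, γ ^ k = γ * (γ ^ j - 1) / (γ - 1) := by
  have : ∑ k ∈ Finset.Icc 1 j, γ ^ k = ∑ k ∈ Finset.range j, γ ^ (1 + k) := by
    rw [← Finset.Ico_add_one_right_eq_Icc, Finset.sum_Ico_eq_sum_range]
    simp
  rw [this]
  simp_rw [pow_add, pow_one, ← Finset.mul_sum, geom_sum_eq hγ1]
  rw [mul_div_assoc]

lemma aux_avg_abs_le (γ : ℂ) (hγ : ‖γ‖ = 1) (j : ℕ) (hj : 0 < j) :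
    ‖(1 / (j : ℂ)) * ∑ k ∈ Finset.Icc 1 j, γ ^ k‖ ≤ 1 := by
  rw [norm_mul]
  have h1 : ‖∑ k ∈ Finset.Icc 1 j, γ ^ k‖ ≤ j := by
    calc ‖∑ k ∈ Finset.Icc 1 j, γ ^ k‖
        ≤ ∑ k ∈ Finset.Icc 1 j, ‖γ ^ k‖ :=
          norm_sum_le _ _
      _ = ∑ k ∈ Finset.Icc 1 j, 1 := by simp [norm_pow, hγ]
      _ = j := by simp
  have h2 : ‖1 / (j : ℂ)‖ = 1 / (j : ℝ) := by
    simp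
  rw [h2]
  have hjp : (0 : ℝ) < j := by exact_mod_cast hj
  calc 1 / (j : ℝ) * ‖∑ k ∈ Finset.Icc 1 j, γ ^ k‖
      ≤ 1 / (j : ℝ) * j := by
        apply mul_le_mul_of_nonneg_left h1 (by positivity)
    _ = 1 := by field_simp

theorem stmt_3 (n m : ℕ) (hn : 0 < n) (hnm : n < m) :
    (2 / Real.pi) * (1 - (n : ℝ) / (m : ℝ)) ≤
      sSup {x : ℝ | ∃ γ : ℂ, ‖γ‖ = 1 ∧
        x = ‖(1 / (n : ℂ)) * ∑ k ∈ Finset.Icc 1 n, γ ^ k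
          - (1 / (m : ℂ)) * ∑ k ∈ Finset.Icc 1 m, γ ^ k‖} := by
  have hm : 0 < m := hn.trans hnm
  have hnR : (0 : ℝ) < n := by exact_mod_cast hn
  have hmR : (0 : ℝ) < m := by exact_mod_cast hm
  have hnC : (n : ℂ) ≠ 0 := by exact_mod_cast hn.ne'
  have hmC : (m : ℂ) ≠ 0 := by exact_mod_cast hm.ne'
  have hπ := Real.pi_pos
  set θ : ℝ := Real.pi / n with hθdef
  have hθpos : 0 < θ := by positivity
  have hθle : θ ≤ Real.pi := by
    rw [hθdef, div_le_iff₀ hnR]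
    have h1 : (1:ℝ) ≤ n := by exact_mod_cast hn
    nlinarith [Real.pi_pos]
  set γ : ℂ := Complex.exp (θ * Complex.I) with hγdef
  have hγabs : ‖γ‖ = 1 := by
    rw [hγdef]; exact Complex.norm_exp_ofReal_mul_I θ
  have hγn : γ ^ n = -1 := by
    rw [hγdef, ← Complex.exp_nat_mul]
    have : (n : ℂ) * ((θ : ℂ) * Complex.I) = Real.pi * Complex.I := by
      rw [hθdef]
      push_cast
      field_simp
    rw [this, Complex.exp_pi_mul_I]
  have hγ1 : γ ≠ 1 := by
    intro h
    rw [h, one_pow] at hγn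
    norm_num at hγn
  have hγsub : γ - 1 ≠ 0 := sub_ne_zero.mpr hγ1
  -- bound |γ - 1| ≤ θ
  have hchord : ‖γ - 1‖ ≤ θ := by
    have h := Complex.norm_sub_le_angle (x := γ) (y := 1)
      hγabs norm_one
    rw [hγdef] at h ⊢
    rw [Complex.angle_exp_one] at h
    have ht : toIocMod Real.two_pi_pos (-Real.pi) θ = θ :=
      (toIocMod_eq_self _).2 ⟨by linarith, by linarith⟩
    rw [ht] at h
    rw [abs_of_pos hθpos] at h
    exact h
  have hchordpos : 0 < ‖γ - 1‖ := by
    exact norm_pos_iff.mpr hγsub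
  -- the key algebraic identity
  have key : (1 / (n : ℂ)) * ∑ k ∈ Finset.Icc 1 n, γ ^ k
      - (1 / (m : ℂ)) * ∑ k ∈ Finset.Icc 1 m, γ ^ k
      = (γ / (γ - 1)) * ((γ ^ n - 1) / n - (γ ^ m - 1) / m) := by
    rw [aux_sum_Icc γ hγ1 n, aux_sum_Icc γ hγ1 m]
    field_simp
  -- lower bound on the modulus
  have hγm : ‖γ ^ m - 1‖ ≤ 2 := by
    calc ‖γ ^ m - 1‖ ≤ ‖γ ^ m‖ + ‖(1:ℂ)‖ :=
          norm_sub_le _ _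
      _ = 2 := by rw [norm_pow, hγabs]; norm_num
  have hinner : (2 : ℝ) / n - 2 / m ≤ ‖(γ ^ n - 1) / n - (γ ^ m - 1) / m‖ := by
    rw [hγn]
    have h1 : ‖(-1 - 1 : ℂ) / n‖ = 2 / n := by
      rw [norm_div]
      norm_num
    have h2 : ‖(γ ^ m - 1) / m‖ ≤ 2 / m := by
      rw [norm_div]
      simp only [Complex.norm_natCast]
      gcongr
    calc (2 : ℝ) / n - 2 / m
        ≤ ‖(-1 - 1 : ℂ) / n‖ - ‖(γ ^ m - 1) / m‖ := by
          rw [h1]; linarith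
      _ ≤ ‖(-1 - 1 : ℂ) / n - (γ ^ m - 1) / m‖ := by
          exact norm_sub_norm_le _ _
  have hfrac : (1 : ℝ) / θ ≤ ‖γ / (γ - 1)‖ := by
    rw [norm_div, hγabs]
    exact one_div_le_one_div_of_le hchordpos hchord
  -- combine
  have hmain : (2 / Real.pi) * (1 - (n : ℝ) / (m : ℝ)) ≤
      ‖(1 / (n : ℂ)) * ∑ k ∈ Finset.Icc 1 n, γ ^ k
        - (1 / (m : ℂ)) * ∑ k ∈ Finset.Icc 1 m, γ ^ k‖ := by
    rw [key, norm_mul]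
    have hpos1 : (0:ℝ) ≤ 2 / (n:ℝ) - 2 / m := by
      have : (2:ℝ)/m ≤ 2/n := by
        apply div_le_div_of_nonneg_left (by norm_num) hnR (by exact_mod_cast hnm.le)
      linarith
    have heq : (2 / Real.pi) * (1 - (n : ℝ) / (m : ℝ)) = (1 / θ) * (2 / n - 2 / m) := by
      rw [hθdef]
      field_simp
    rw [heq]
    apply mul_le_mul hfrac hinner hpos1 (norm_nonneg _)
  -- finish via le_csSup
  apply hmain.trans
  apply le_csSup
  · refine ⟨2, ?_⟩
    rintro x ⟨δ, hδ, rfl⟩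
    calc ‖(1 / (n : ℂ)) * ∑ k ∈ Finset.Icc 1 n, δ ^ k
          - (1 / (m : ℂ)) * ∑ k ∈ Finset.Icc 1 m, δ ^ k‖
        ≤ ‖(1 / (n : ℂ)) * ∑ k ∈ Finset.Icc 1 n, δ ^ k‖
          + ‖(1 / (m : ℂ)) * ∑ k ∈ Finset.Icc 1 m, δ ^ k‖ :=
          norm_sub_le _ _
      _ ≤ 1 + 1 := add_le_add (aux_avg_abs_le δ hδ n hn) (aux_avg_abs_le δ hδ m hm)
      _ = 2 := by norm_num
  · exact ⟨γ, hγabs, rfl⟩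
end

section
/- Let 0 < a < b < 1 and define g(t) = sin(a t)/(a t) − sin(b t)/(b t) (extended by its limit at 0). Then sup_{t ∈ ℝ} |g(t)| ≤ (1/(1−b)) · sup_{ℓ ∈ ℤ} |g(ℓ)|. -/
open Real Set

lemma aux_mono {f f' : ℝ → ℝ} (hf : ∀ x, HasDerivAt f (f' x) x)
    (h0 : ∀ x, 0 ≤ x → 0 ≤ f' x) {y : ℝ} (hy : 0 ≤ y) : f 0 ≤ f y := by
  have hd : Differentiable ℝ f := fun x => (hf x).differentiableAt
  have hmono : MonotoneOn f (Set.Ici (0:ℝ)) := by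
    apply monotoneOn_of_deriv_nonneg (convex_Ici 0) hd.continuous.continuousOn
    · exact fun x _ => (hd x).differentiableWithinAt
    · intro x hx
      rw [interior_Ici] at hx
      rw [(hf x).deriv]
      exact h0 x hx.le
  exact hmono Set.self_mem_Ici (Set.mem_Ici.2 hy) hy

lemma cube_le_sin {x : ℝ} (hx : 0 ≤ x) : x - x^3/6 ≤ Real.sin x := by
  have h := aux_mono (f := fun x => Real.sin x - x + x^3/6)
      (f' := fun x => Real.cos x - 1 + x^2/2) (fun x => by
        have h1 : HasDerivAt (fun x : ℝ => Real.sin x - x + x^3/6)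
            (Real.cos x - 1 + (3:ℕ) * x^(3-1) / 6) x :=
          ((Real.hasDerivAt_sin x).sub (hasDerivAt_id x)).add ((hasDerivAt_pow 3 x).div_const 6)
        convert h1 using 1
        norm_num
        ring)
      (fun x _ => by nlinarith [Real.one_sub_sq_div_two_le_cos (x := x)]) hx
  simp at h
  linarith

lemma sin_quad {x : ℝ} (h0 : 0 ≤ x) (hπ : x ≤ Real.pi) :
    x * (Real.pi - x) / Real.pi ≤ Real.sin x := by
  have hpi := Real.pi_pos
  have hpi2 : Real.pi < 3.15 := Real.pi_lt_d2
  rcases le_or_gt x (Real.pi/2) with h | h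
  · have h1 := cube_le_sin h0
    have hx2 : x ≤ 1.575 := by linarith
    have h6 : Real.pi * x ≤ 6 := by
      nlinarith [mul_le_mul hpi2.le hx2 h0 (by norm_num : (0:ℝ) ≤ 3.15)]
    have key : 0 ≤ x^2 * (6 - Real.pi * x) := mul_nonneg (sq_nonneg x) (by linarith)
    rw [div_le_iff₀ hpi]
    nlinarith [mul_le_mul_of_nonneg_right h1 hpi.le]
  · have hz0 : (0:ℝ) ≤ Real.pi - x := by linarith
    have h1 := cube_le_sin hz0
    rw [Real.sin_pi_sub] at h1
    have hx2 : Real.pi - x ≤ 1.575 := by linarith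
    have h6 : Real.pi * (Real.pi - x) ≤ 6 := by
      nlinarith [mul_le_mul hpi2.le hx2 hz0 (by norm_num : (0:ℝ) ≤ 3.15)]
    have key : 0 ≤ (Real.pi - x)^2 * (6 - Real.pi * (Real.pi - x)) :=
      mul_nonneg (sq_nonneg _) (by linarith)
    rw [div_le_iff₀ hpi]
    nlinarith [mul_le_mul_of_nonneg_right h1 hpi.le]

lemma k_abs_nonneg : ∀ y : ℝ, 0 ≤ y → |y * Real.cos y - Real.sin y| ≤ y^2/2 := by
  intro y hy
  rw [abs_le]
  constructor
  · have h := aux_mono (f := fun x => x^2/2 + (x * Real.cos x - Real.sin x))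
        (f' := fun x => x - x * Real.sin x) (fun x => by
          have h1 : HasDerivAt (fun x : ℝ => x^2/2 + (x * Real.cos x - Real.sin x))
              ((2:ℕ) * x^(2-1)/2 + ((1 * Real.cos x + x * (-Real.sin x)) - Real.cos x)) x :=
            ((hasDerivAt_pow 2 x).div_const 2).add
              (((hasDerivAt_id x).mul (Real.hasDerivAt_cos x)).sub (Real.hasDerivAt_sin x))
          convert h1 using 1
          norm_num
          ring)
        (fun x hx => by
          show 0 ≤ x - x * Real.sin x
          nlinarith [mul_nonneg hx (by linarith [Real.sin_le_one x] : (0:ℝ) ≤ 1 - Real.sin x)]) hy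
    simp at h
    linarith
  · have h := aux_mono (f := fun x => x^2/2 - (x * Real.cos x - Real.sin x))
        (f' := fun x => x + x * Real.sin x) (fun x => by
          have h1 : HasDerivAt (fun x : ℝ => x^2/2 - (x * Real.cos x - Real.sin x))
              ((2:ℕ) * x^(2-1)/2 - ((1 * Real.cos x + x * (-Real.sin x)) - Real.cos x)) x :=
            ((hasDerivAt_pow 2 x).div_const 2).sub
              (((hasDerivAt_id x).mul (Real.hasDerivAt_cos x)).sub (Real.hasDerivAt_sin x))
          convert h1 using 1
          norm_num)
        (fun x hx => by
          show 0 ≤ x + x * Real.sin x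
          nlinarith [mul_nonneg hx (by linarith [Real.neg_one_le_sin x] : (0:ℝ) ≤ 1 + Real.sin x)]) hy
    simp at h
    linarith

lemma k_abs (y : ℝ) : |y * Real.cos y - Real.sin y| ≤ y^2/2 := by
  rcases le_total 0 y with hy | hy
  · exact k_abs_nonneg y hy
  · have h := k_abs_nonneg (-y) (by linarith)
    rw [Real.cos_neg, Real.sin_neg] at h
    have e : -y * Real.cos y - -Real.sin y = -(y * Real.cos y - Real.sin y) := by ring
    rw [e, abs_neg, neg_pow] at h
    simpa using h

theorem stmt_4 (a b : ℝ) (ha : 0 < a) (hab : a < b) (hb : b < 1)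
    (g : ℝ → ℝ)
    (hg : ∀ t : ℝ, t ≠ 0 →
      g t = Real.sin (a * t) / (a * t) - Real.sin (b * t) / (b * t))
    (hg0 : g 0 = 0) :
    sSup {x : ℝ | ∃ t : ℝ, x = |g t|} ≤
      (1 / (1 - b)) * sSup {x : ℝ | ∃ ℓ : ℤ, x = |g (ℓ : ℝ)|} := by
  have hb0 : 0 < b := ha.trans hab
  have hb1 : 0 < 1 - b := by linarith
  -- derivative of sinc
  have hsc : ∀ y : ℝ, y ≠ 0 →
      HasDerivAt (fun y => Real.sin y / y) ((y * Real.cos y - Real.sin y) / y^2) y := by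
    intro y hy
    have h := (Real.hasDerivAt_sin y).div (hasDerivAt_id y) hy
    exact h.congr_deriv (by show (Real.cos y * y - Real.sin y * 1) / y ^ 2 = _; ring)
  have hk : ∀ y : ℝ, y ≠ 0 → |(y * Real.cos y - Real.sin y) / y^2| ≤ 1/2 := by
    intro y hy
    rw [abs_div, abs_of_nonneg (sq_nonneg y), div_le_iff₀ (by positivity)]
    calc |y * Real.cos y - Real.sin y| ≤ y^2/2 := k_abs y
      _ = 1/2 * y^2 := by ring
  -- derivative of x ↦ sin (c x) / (c x)
  have hGc : ∀ (c x : ℝ), c ≠ 0 → x ≠ 0 →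
      HasDerivAt (fun x => Real.sin (c*x) / (c*x))
        (((c*x) * Real.cos (c*x) - Real.sin (c*x)) / (c*x)^2 * c) x := by
    intro c x hc hx
    have h1 : HasDerivAt (fun x : ℝ => c * x) c x := by
      simpa using (hasDerivAt_id x).const_mul c
    have := (hsc (c*x) (mul_ne_zero hc hx)).comp x h1
    exact this
  set G : ℝ → ℝ := fun x => Real.sin (a*x) / (a*x) - Real.sin (b*x) / (b*x) with hGdef
  set D : ℝ → ℝ := fun x =>
      ((a*x) * Real.cos (a*x) - Real.sin (a*x)) / (a*x)^2 * a -
      ((b*x) * Real.cos (b*x) - Real.sin (b*x)) / (b*x)^2 * b with hDdef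
  have hGd : ∀ x : ℝ, x ≠ 0 → HasDerivAt G (D x) x := fun x hx =>
    (hGc a x ha.ne' hx).sub (hGc b x hb0.ne' hx)
  -- bound on D via MVT in the parameter c
  have hDb : ∀ x : ℝ, x ≠ 0 → |D x| ≤ 3/2 * (b - a) := by
    intro x hx
    set F : ℝ → ℝ := fun c =>
      ((c*x) * Real.cos (c*x) - Real.sin (c*x)) / (c*x)^2 * c with hFdef
    have hs : Set.uIcc a b = Set.Icc a b := Set.uIcc_of_le hab.le
    have hFd : ∀ c ∈ Set.uIcc a b,
        HasDerivWithinAt F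
          (-(Real.sin (c*x)) - ((c*x) * Real.cos (c*x) - Real.sin (c*x)) / (c*x)^2)
          (Set.uIcc a b) c := by
      intro c hc
      rw [hs] at hc
      have hc0 : c ≠ 0 := by have := hc.1; intro h; rw [h] at this; linarith
      have hcx0 : c * x ≠ 0 := mul_ne_zero hc0 hx
      have hcx : HasDerivAt (fun c : ℝ => c * x) x c := by
        simpa using (hasDerivAt_id c).mul_const x
      have hcos : HasDerivAt (fun c : ℝ => Real.cos (c*x)) (-Real.sin (c*x) * x) c := by
        have := (Real.hasDerivAt_cos (c*x)).comp c hcx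
        exact this
      have hsin : HasDerivAt (fun c : ℝ => Real.sin (c*x)) (Real.cos (c*x) * x) c := by
        have := (Real.hasDerivAt_sin (c*x)).comp c hcx
        exact this
      have hN : HasDerivAt (fun c : ℝ => (c*x) * Real.cos (c*x) - Real.sin (c*x))
          (x * Real.cos (c*x) + (c*x) * (-Real.sin (c*x) * x) - Real.cos (c*x) * x) c :=
        (hcx.mul hcos).sub hsin
      have hden : HasDerivAt (fun c : ℝ => (c*x)^2) ((2:ℕ) * (c*x)^(2-1) * x) c :=
        hcx.pow 2
      have hQ := (hN.div hden (pow_ne_zero 2 hcx0)).mul (hasDerivAt_id c)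
      have : HasDerivAt F
          (((x * Real.cos (c*x) + (c*x) * (-Real.sin (c*x) * x) - Real.cos (c*x) * x) * (c*x)^2 -
            ((c*x) * Real.cos (c*x) - Real.sin (c*x)) * ((2:ℕ) * (c*x)^(2-1) * x)) / ((c*x)^2)^2 * c
           + ((c*x) * Real.cos (c*x) - Real.sin (c*x)) / (c*x)^2 * 1) c := by
        have hQ' : HasDerivAt F _ c := hQ
        simpa using hQ'
      have heq : (((x * Real.cos (c*x) + (c*x) * (-Real.sin (c*x) * x) - Real.cos (c*x) * x) * (c*x)^2 -
            ((c*x) * Real.cos (c*x) - Real.sin (c*x)) * ((2:ℕ) * (c*x)^(2-1) * x)) / ((c*x)^2)^2 * c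
           + ((c*x) * Real.cos (c*x) - Real.sin (c*x)) / (c*x)^2 * 1)
          = -(Real.sin (c*x)) - ((c*x) * Real.cos (c*x) - Real.sin (c*x)) / (c*x)^2 := by
        field_simp
        ring
      rw [heq] at this
      exact this.hasDerivWithinAt
    have hbound : ∀ c ∈ Set.uIcc a b,
        ‖-(Real.sin (c*x)) - ((c*x) * Real.cos (c*x) - Real.sin (c*x)) / (c*x)^2‖ ≤ 3/2 := by
      intro c hc
      rw [hs] at hc
      have hc0 : c ≠ 0 := by have := hc.1; intro h; rw [h] at this; linarith
      have h1 := hk (c*x) (mul_ne_zero hc0 hx)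
      have h2 : |Real.sin (c*x)| ≤ 1 := Real.abs_sin_le_one _
      rw [Real.norm_eq_abs]
      calc |(-(Real.sin (c*x)) - ((c*x) * Real.cos (c*x) - Real.sin (c*x)) / (c*x)^2)|
          ≤ |(-(Real.sin (c*x)))| + |((c*x) * Real.cos (c*x) - Real.sin (c*x)) / (c*x)^2| :=
            abs_sub _ _
        _ ≤ 1 + 1/2 := by rw [abs_neg]; exact add_le_add h2 h1
        _ = 3/2 := by norm_num
    have hmvt := (convex_uIcc a b).norm_image_sub_le_of_norm_hasDerivWithin_le
      hFd hbound (Set.right_mem_uIcc) (Set.left_mem_uIcc)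
    rw [Real.norm_eq_abs, Real.norm_eq_abs] at hmvt
    have hD : D x = F a - F b := rfl
    rw [hD]
    calc |F a - F b| ≤ 3/2 * |a - b| := hmvt
      _ = 3/2 * (b - a) := by rw [abs_sub_comm, abs_of_nonneg (by linarith)]
  -- Lipschitz-type bound to the nearest integer
  have hLip : ∀ t : ℝ, |g t - g ((round t : ℤ) : ℝ)| ≤ 3/4 * (b - a) := by
    intro t
    have hrd : |t - ((round t : ℤ) : ℝ)| ≤ 1/2 := abs_sub_round t
    by_cases hl : round t = 0
    · rw [hl, Int.cast_zero, hg0, sub_zero]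
      by_cases ht : t = 0
      · rw [ht, hg0]; simp; linarith
      · rw [hg t ht]
        have ht12 : |t| ≤ 1/2 := by
          have := hrd; rw [hl] at this; simpa using this
        have hne : ∀ y ∈ Set.uIcc (a*t) (b*t), y ≠ 0 := by
          intro y hy
          rcases Set.mem_uIcc.1 hy with ⟨h1, h2⟩ | ⟨h1, h2⟩ <;>
            rcases lt_or_gt_of_ne ht with htn | htp <;> nlinarith
        have hder : ∀ y ∈ Set.uIcc (a*t) (b*t),
            HasDerivWithinAt (fun y => Real.sin y / y)
              ((y * Real.cos y - Real.sin y)/y^2) (Set.uIcc (a*t) (b*t)) y :=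
          fun y hy => (hsc y (hne y hy)).hasDerivWithinAt
        have hbd : ∀ y ∈ Set.uIcc (a*t) (b*t),
            ‖(y * Real.cos y - Real.sin y)/y^2‖ ≤ 1/2 := fun y hy => by
          rw [Real.norm_eq_abs]; exact hk y (hne y hy)
        have hmvt := (convex_uIcc (a*t) (b*t)).norm_image_sub_le_of_norm_hasDerivWithin_le
          hder hbd Set.right_mem_uIcc Set.left_mem_uIcc
        rw [Real.norm_eq_abs, Real.norm_eq_abs] at hmvt
        have habt : |a*t - b*t| = (b - a) * |t| := by
          rw [show a*t - b*t = (a-b)*t by ring, abs_mul, abs_of_neg (by linarith : a - b < 0)]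
          ring
        rw [habt] at hmvt
        calc |Real.sin (a*t)/(a*t) - Real.sin (b*t)/(b*t)| ≤ 1/2 * ((b-a) * |t|) := hmvt
          _ ≤ 3/4 * (b - a) := by nlinarith [abs_nonneg t]
    · set ℓ : ℝ := ((round t : ℤ) : ℝ) with hℓ
      have hl1 : (1:ℝ) ≤ |ℓ| := by
        have h1 : (1:ℤ) ≤ |round t| := Int.one_le_abs hl
        rw [hℓ, ← Int.cast_abs]
        exact_mod_cast h1
      have hne : ∀ x ∈ Set.uIcc ℓ t, x ≠ 0 := by
        intro x hx
        rcases le_abs'.1 hl1 with hc | hc <;>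
          rcases Set.mem_uIcc.1 hx with ⟨h1, h2⟩ | ⟨h1, h2⟩ <;>
          rcases abs_le.1 hrd with ⟨h3, h4⟩ <;> intro hx0 <;> rw [hx0] at h1 h2 <;> linarith
      have hderG : ∀ x ∈ Set.uIcc ℓ t, HasDerivWithinAt G (D x) (Set.uIcc ℓ t) x :=
        fun x hx => (hGd x (hne x hx)).hasDerivWithinAt
      have hbdG : ∀ x ∈ Set.uIcc ℓ t, ‖D x‖ ≤ 3/2 * (b - a) := fun x hx => by
        rw [Real.norm_eq_abs]; exact hDb x (hne x hx)
      have hmvt := (convex_uIcc ℓ t).norm_image_sub_le_of_norm_hasDerivWithin_le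
        hderG hbdG Set.left_mem_uIcc Set.right_mem_uIcc
      rw [Real.norm_eq_abs, Real.norm_eq_abs] at hmvt
      have hgt : g t = G t := hg t (hne t Set.right_mem_uIcc)
      have hgl : g ℓ = G ℓ := hg ℓ (hne ℓ Set.left_mem_uIcc)
      rw [hgt, hgl]
      calc |G t - G ℓ| ≤ 3/2 * (b - a) * |t - ℓ| := hmvt
        _ ≤ 3/2 * (b - a) * (1/2) := by
            apply mul_le_mul_of_nonneg_left hrd (by linarith)
        _ = 3/4 * (b - a) := by ring
  -- boundedness of the sets
  have habs2 : ∀ t : ℝ, |g t| ≤ 2 := by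
    intro t
    by_cases ht : t = 0
    · rw [ht, hg0]; norm_num
    · rw [hg t ht]
      have h1 : ∀ y : ℝ, |Real.sin y / y| ≤ 1 := by
        intro y
        rcases eq_or_ne y 0 with hy | hy
        · simp [hy]
        · rw [abs_div]
          exact div_le_one_of_le₀ Real.abs_sin_le_abs (abs_nonneg y)
      calc |Real.sin (a*t)/(a*t) - Real.sin (b*t)/(b*t)|
          ≤ |Real.sin (a*t)/(a*t)| + |Real.sin (b*t)/(b*t)| := abs_sub _ _
        _ ≤ 1 + 1 := add_le_add (h1 _) (h1 _)
        _ = 2 := by norm_num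
  set A := {x : ℝ | ∃ t : ℝ, x = |g t|} with hA
  set B := {x : ℝ | ∃ ℓ : ℤ, x = |g (ℓ : ℝ)|} with hB
  have hAbdd : BddAbove A := ⟨2, by rintro x ⟨t, rfl⟩; exact habs2 t⟩
  have hBbdd : BddAbove B := ⟨2, by rintro x ⟨l, rfl⟩; exact habs2 _⟩
  have hAne : A.Nonempty := ⟨|g 0|, 0, rfl⟩
  have hBne : B.Nonempty := ⟨|g ((0:ℤ):ℝ)|, 0, rfl⟩
  -- sup over ℝ ≤ sup over ℤ + 3/4 (b - a)
  have hMub : sSup A ≤ sSup B + 3/4 * (b - a) := by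
    apply csSup_le hAne
    rintro x ⟨t, rfl⟩
    have h1 : |g ((round t : ℤ) : ℝ)| ≤ sSup B := le_csSup hBbdd ⟨round t, rfl⟩
    have h2 := hLip t
    calc |g t| = |g ((round t : ℤ) : ℝ) + (g t - g ((round t : ℤ) : ℝ))| := by ring_nf
      _ ≤ |g ((round t : ℤ) : ℝ)| + |g t - g ((round t : ℤ) : ℝ)| := abs_add_le _ _
      _ ≤ sSup B + 3/4 * (b - a) := add_le_add h1 h2
  -- lower bound on sup over ℝ
  have hπ := Real.pi_pos
  have hMlb : (b - a) / b ≤ sSup A := by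
    have ht0 : Real.pi / b ≠ 0 := by positivity
    have hbt : b * (Real.pi / b) = Real.pi := by field_simp
    have hgt0 : g (Real.pi / b) = Real.sin (a * (Real.pi / b)) / (a * (Real.pi / b)) := by
      rw [hg _ ht0, hbt, Real.sin_pi, zero_div, sub_zero]
    set x₀ : ℝ := a * (Real.pi / b) with hx₀
    have hx₀pos : 0 < x₀ := by positivity
    have hx₀lt : x₀ ≤ Real.pi := by
      rw [hx₀]
      have h5 : a * (Real.pi / b) ≤ b * (Real.pi / b) :=
        mul_le_mul_of_nonneg_right hab.le (by positivity)
      rw [hbt] at h5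
      linarith
    have hq := sin_quad hx₀pos.le hx₀lt
    have h2 : (Real.pi - x₀) / Real.pi ≤ Real.sin x₀ / x₀ := by
      rw [div_le_div_iff₀ hπ hx₀pos]
      calc (Real.pi - x₀) * x₀ = x₀ * (Real.pi - x₀) / Real.pi * Real.pi := by
            field_simp
        _ ≤ Real.sin x₀ * Real.pi := by
            apply mul_le_mul_of_nonneg_right hq hπ.le
    have h3 : (Real.pi - x₀) / Real.pi = (b - a) / b := by
      rw [hx₀]; field_simp
    have h4 : (b - a)/b ≤ g (Real.pi / b) := by rw [hgt0]; rw [← h3]; exact h2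
    calc (b - a)/b ≤ g (Real.pi / b) := h4
      _ ≤ |g (Real.pi / b)| := le_abs_self _
      _ ≤ sSup A := le_csSup hAbdd ⟨Real.pi / b, rfl⟩
  -- conclude
  have hba : b - a ≤ b * sSup A := by
    rw [div_le_iff₀ hb0] at hMlb
    linarith [hMlb]
  have hfin : sSup A * (1 - b) ≤ sSup B := by nlinarith [hMub, hba]
  calc sSup A ≤ sSup B / (1 - b) := (le_div_iff₀ hb1).mpr hfin
    _ = 1 / (1 - b) * sSup B := by ring
end

section
/- If (ε_k) is any sequence of positive reals decreasing to 0, then ∑_{k=1}^∞ sup_{t>0} |sin(t ε_{k+1})/(t ε_{k+1}) − sin(t ε_k)/(t ε_k)| = ∞. -/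
open Real

lemma aux_sinc_le_one (u : ℝ) (hu : u ≠ 0) : |Real.sin u / u| ≤ 1 := by
  rw [abs_div, div_le_one (abs_pos.mpr hu)]
  exact Real.abs_sin_le_abs

lemma aux_sin_lower {r : ℝ} (h0 : 0 ≤ r) (h1 : r ≤ 1) :
    2 * r * (1 - r) ≤ Real.sin (Real.pi * r) := by
  rcases le_or_gt r (1/2) with h | h
  · have := Real.mul_le_sin (x := Real.pi * r) (by positivity)
      (by nlinarith [Real.pi_pos])
    have hp : 2 / Real.pi * (Real.pi * r) = 2 * r := by
      field_simp
    nlinarith [Real.pi_pos]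
  · have hs : Real.sin (Real.pi * r) = Real.sin (Real.pi * (1 - r)) := by
      rw [show Real.pi * r = Real.pi - Real.pi * (1 - r) by ring, Real.sin_pi_sub]
    have := Real.mul_le_sin (x := Real.pi * (1 - r)) (by nlinarith [Real.pi_pos])
      (by nlinarith [Real.pi_pos])
    have hp : 2 / Real.pi * (Real.pi * (1 - r)) = 2 * (1 - r) := by
      field_simp
    nlinarith [Real.pi_pos]

open Filter in
theorem stmt_5 (ε : ℕ → ℝ) (hpos : ∀ k, 0 < ε k)
    (hmono : ∀ k, ε (k + 1) ≤ ε k)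
    (hlim : Tendsto ε atTop (nhds 0)) :
    Tendsto (fun M => ∑ k ∈ Finset.range M,
        sSup {x : ℝ | ∃ t : ℝ, 0 < t ∧
          x = |Real.sin (t * ε (k + 1)) / (t * ε (k + 1))
              - Real.sin (t * ε k) / (t * ε k)|})
      atTop atTop := by
  have hA : Antitone ε := antitone_nat_of_succ_le hmono
  set b : ℕ → ℝ := fun k => 1 - ε (k + 1) / ε k with hb
  have hb0 : ∀ k, 0 ≤ b k := fun k => by
    have := div_le_one_of_le₀ (hmono k) (hpos k).le
    simp only [hb]; linarith
  -- each sup is at least (2/π) * b k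
  have key : ∀ k, 2 / Real.pi * b k ≤
      sSup {x : ℝ | ∃ t : ℝ, 0 < t ∧
        x = |Real.sin (t * ε (k + 1)) / (t * ε (k + 1))
            - Real.sin (t * ε k) / (t * ε k)|} := by
    intro k
    have hek := hpos k
    have hek1 := hpos (k + 1)
    set r : ℝ := ε (k + 1) / ε k with hr
    have hr0 : 0 < r := div_pos hek1 hek
    have hr1 : r ≤ 1 := div_le_one_of_le₀ (hmono k) hek.le
    have hbdd : BddAbove {x : ℝ | ∃ t : ℝ, 0 < t ∧
        x = |Real.sin (t * ε (k + 1)) / (t * ε (k + 1))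
            - Real.sin (t * ε k) / (t * ε k)|} := by
      refine ⟨2, fun x hx => ?_⟩
      obtain ⟨t, ht, rfl⟩ := hx
      have h1 := aux_sinc_le_one (t * ε (k + 1)) (by positivity)
      have h2 := aux_sinc_le_one (t * ε k) (by positivity)
      calc |Real.sin (t * ε (k + 1)) / (t * ε (k + 1))
            - Real.sin (t * ε k) / (t * ε k)|
          ≤ |Real.sin (t * ε (k + 1)) / (t * ε (k + 1))|
            + |Real.sin (t * ε k) / (t * ε k)| := abs_sub _ _
        _ ≤ 2 := by linarith
    have hmem : |Real.sin (Real.pi * r) / (Real.pi * r) - Real.sin Real.pi / Real.pi|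
        ∈ {x : ℝ | ∃ t : ℝ, 0 < t ∧
        x = |Real.sin (t * ε (k + 1)) / (t * ε (k + 1))
            - Real.sin (t * ε k) / (t * ε k)|} := by
      refine ⟨Real.pi / ε k, by positivity, ?_⟩
      have e1 : Real.pi / ε k * ε (k + 1) = Real.pi * r := by
        rw [hr, div_mul_eq_mul_div, mul_div_assoc]
      have e2 : Real.pi / ε k * ε k = Real.pi := by field_simp
      rw [e1, e2]
    refine le_trans ?_ (le_csSup hbdd hmem)
    rw [Real.sin_pi, zero_div, sub_zero]
    have hsin : 0 ≤ Real.sin (Real.pi * r) := by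
      apply Real.sin_nonneg_of_nonneg_of_le_pi (by positivity)
      nlinarith [Real.pi_pos]
    rw [abs_of_nonneg (by positivity)]
    rw [le_div_iff₀ (by positivity)]
    have := aux_sin_lower hr0.le hr1
    have hpi := Real.pi_pos
    have heq : 2 / Real.pi * (1 - r) * (Real.pi * r) = 2 * r * (1 - r) := by
      field_simp
    simpa [hb, ← hr, heq] using this
  -- partial sums of b diverge
  have hsum : ∀ M N, M ≤ N → 1 - ε N / ε M ≤ ∑ k ∈ Finset.Ico M N, b k := by
    intro M N hMN
    induction N, hMN using Nat.le_induction with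
    | base => simp [div_self (hpos M).ne']
    | succ N hMN ih =>
      rw [Finset.sum_Ico_succ_top hMN]
      have h1 : ε N ≤ ε M := hA hMN
      have h2 := hmono N
      have hM := hpos M
      have hN := hpos N
      have hN1 := hpos (N + 1)
      have hd : (1 - ε N / ε M + (1 - ε (N + 1) / ε N)) - (1 - ε (N + 1) / ε M)
          = (ε M - ε N) * (ε N - ε (N + 1)) / (ε M * ε N) := by
        field_simp; ring
      have hnn : 0 ≤ (ε M - ε N) * (ε N - ε (N + 1)) / (ε M * ε N) :=
        div_nonneg (mul_nonneg (by linarith) (by linarith)) (by positivity)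
      simp only [hb]
      linarith
  have hunb : ∀ n : ℕ, ∃ M : ℕ, (n : ℝ) / 2 ≤ ∑ k ∈ Finset.range M, b k := by
    intro n
    induction n with
    | zero => exact ⟨0, by simp⟩
    | succ n ih =>
      obtain ⟨M, hM⟩ := ih
      have h2 : ∀ᶠ m in Filter.atTop, ε m < ε M / 2 :=
        hlim.eventually (gt_mem_nhds (half_pos (hpos M)))
      obtain ⟨N, hN⟩ := (h2.and (Filter.eventually_ge_atTop M)).exists
      refine ⟨N, ?_⟩
      rw [← Finset.sum_range_add_sum_Ico b hN.2]
      have h3 := hsum M N hN.2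
      have h4 : ε N / ε M ≤ 1 / 2 := by
        rw [div_le_div_iff₀ (hpos M) (by norm_num)]
        linarith [hN.1]
      push_cast
      linarith
  have hmonos : Monotone (fun M => ∑ k ∈ Finset.range M, b k) :=
    monotone_nat_of_le_succ (fun n => by
      rw [Finset.sum_range_succ]; linarith [hb0 n])
  have hbt : Filter.Tendsto (fun M => ∑ k ∈ Finset.range M, b k)
      Filter.atTop Filter.atTop := by
    apply tendsto_atTop_atTop_of_monotone' hmonos
    rintro ⟨C, hC⟩
    obtain ⟨n, hn⟩ := exists_nat_gt (2 * C)
    obtain ⟨M, hM⟩ := hunb n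
    have := hC (Set.mem_range_self M)
    have : (n : ℝ) / 2 ≤ C := le_trans hM this
    linarith
  have hct : Filter.Tendsto (fun M => 2 / Real.pi * ∑ k ∈ Finset.range M, b k)
      Filter.atTop Filter.atTop :=
    Filter.Tendsto.const_mul_atTop (by positivity) hbt
  apply Filter.tendsto_atTop_mono _ hct
  intro M
  rw [Finset.mul_sum]
  exact Finset.sum_le_sum fun k _ => key k
end

section
/- Let m_n(γ) = (1/n)∑_{k=1}^n γ^k for γ on the unit circle. Fix γ ≠ 1 with |γ| = 1. Then ∑_{k=1}^∞ |m_{k+1}(γ) − m_k(γ)| = ∞. -/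
open Filter in
theorem stmt_8 (γ : ℂ) (hγ : ‖γ‖ = 1) (hγ1 : γ ≠ 1)
    (m : ℕ → ℂ → ℂ)
    (hm : ∀ n γ', m n γ' = (1 / (n : ℂ)) * ∑ k ∈ Finset.Icc 1 n, γ' ^ k) :
    Tendsto (fun M => ∑ k ∈ Finset.range M,
        ‖m (k + 2) γ - m (k + 1) γ‖) atTop atTop := by
  set C : ℝ := 2 / ‖γ - 1‖ with hCdef
  have hγ1' : ‖γ - 1‖ > 0 := by
    exact norm_pos_iff.mpr (sub_ne_zero.mpr hγ1)
  have hC : 0 < C := by positivity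
  -- bound on the geometric sums
  have hS : ∀ n : ℕ, ‖∑ k ∈ Finset.Icc 1 n, γ ^ k‖ ≤ 2 / ‖γ - 1‖ := by
    intro n
    have h1 : ∑ k ∈ Finset.Icc 1 n, γ ^ k = γ * ((γ ^ n - 1) / (γ - 1)) := by
      rw [← Finset.Ico_add_one_right_eq_Icc, Finset.sum_Ico_eq_sum_range]
      simp only [Nat.add_sub_cancel, Nat.succ_sub_one]
      rw [← geom_sum_eq hγ1 n, Finset.mul_sum]
      apply Finset.sum_congr rfl
      intro i _
      ring
    rw [h1, norm_mul, hγ, one_mul, norm_div]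
    apply div_le_div_of_nonneg_right _ hγ1'.le
    · calc ‖γ ^ n - 1‖ ≤ ‖γ ^ n‖ + 1 := by
            simpa using (norm_sub_le (γ ^ n) 1)
        _ ≤ 2 := by rw [norm_pow, hγ, one_pow]; norm_num
  have hmb : ∀ n : ℕ, 1 ≤ n → ‖m n γ‖ ≤ C / n := by
    intro n hn
    rw [hm, norm_mul, norm_div, norm_one, Complex.norm_natCast]
    have hn0 : (0:ℝ) < n := by exact_mod_cast hn
    rw [div_mul_eq_mul_div, one_mul, hCdef]
    apply div_le_div_of_nonneg_right (hS n) hn0.le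
  -- the recurrence
  have hdiff : ∀ n : ℕ, 1 ≤ n →
      m (n + 1) γ - m n γ = (1 / ((n:ℂ) + 1)) * (γ ^ (n + 1) - m n γ) := by
    intro n hn
    have hn0 : (n : ℂ) ≠ 0 := by exact_mod_cast (Nat.pos_of_ne_zero (by omega)).ne'
    have hn1 : (n : ℂ) + 1 ≠ 0 := by
      intro h
      have : ((n : ℂ) + 1) = ((n + 1 : ℕ) : ℂ) := by push_cast; ring
      rw [this] at h
      exact_mod_cast h
    have hs : ∑ k ∈ Finset.Icc 1 (n + 1), γ ^ k
        = (∑ k ∈ Finset.Icc 1 n, γ ^ k) + γ ^ (n + 1) := by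
      rw [Finset.sum_Icc_succ_top (by omega)]
    rw [hm, hm, hs]
    push_cast
    field_simp
    ring
  set N : ℕ := ⌈2 * C⌉₊ + 1 with hNdef
  have hN1 : 1 ≤ N := by omega
  -- smallness
  have hsmall : ∀ n : ℕ, N ≤ n → ‖m n γ‖ ≤ 1 / 2 := by
    intro n hn
    have h2C : 2 * C ≤ (n : ℝ) := by
      calc 2 * C ≤ (⌈2 * C⌉₊ : ℝ) := Nat.le_ceil _
        _ ≤ n := by exact_mod_cast le_trans (by omega) hn
    have hn0 : (0:ℝ) < n := lt_of_lt_of_le (by positivity) h2C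
    calc ‖m n γ‖ ≤ C / n := hmb n (le_trans hN1 hn)
      _ ≤ C / (2 * C) := by
          apply div_le_div_of_nonneg_left (le_of_lt hC) (by positivity) h2C
      _ = 1 / 2 := by field_simp
  -- lower bound
  have hlow : ∀ n : ℕ, N ≤ n →
      1 / (2 * ((n:ℝ) + 1)) ≤ ‖m (n + 1) γ - m n γ‖ := by
    intro n hn
    rw [hdiff n (le_trans hN1 hn), norm_mul, norm_div, norm_one]
    have h1 : ‖(n:ℂ) + 1‖ = (n:ℝ) + 1 := by
      have : ((n : ℂ) + 1) = ((n + 1 : ℕ) : ℂ) := by push_cast; ring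
      rw [this, Complex.norm_natCast]; push_cast; ring
    rw [h1]
    have h2 : (1:ℝ) / 2 ≤ ‖γ ^ (n + 1) - m n γ‖ := by
      have := norm_sub_norm_le (γ ^ (n + 1)) (m n γ)
      have h3 : ‖γ ^ (n + 1)‖ = 1 := by rw [norm_pow, hγ, one_pow]
      have h4 := hsmall n hn
      calc (1:ℝ)/2 = 1 - 1/2 := by norm_num
        _ ≤ ‖γ ^ (n+1)‖ - ‖m n γ‖ := by
            rw [h3]; linarith
        _ ≤ ‖γ ^ (n + 1) - m n γ‖ :=
            norm_sub_norm_le _ _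
    have hne : ((n:ℝ) + 1) ≠ 0 := by positivity
    calc 1 / (2 * ((n:ℝ) + 1)) = (1 / ((n:ℝ)+1)) * (1/2) := by field_simp
      _ ≤ (1 / ((n:ℝ)+1)) * ‖γ ^ (n + 1) - m n γ‖ := by
          apply mul_le_mul_of_nonneg_left h2 (by positivity)
      _ = _ := by ring
  -- conclude via non-summability
  have hnonneg : ∀ k : ℕ, 0 ≤ ‖m (k + 2) γ - m (k + 1) γ‖ :=
    fun k => norm_nonneg _
  rw [← not_summable_iff_tendsto_nat_atTop_of_nonneg hnonneg]
  intro hsum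
  have h2 : Summable (fun k : ℕ => ‖m (k + N + 2) γ - m (k + N + 1) γ‖) := by
    have := (summable_nat_add_iff N).2 hsum
    simpa [add_assoc, add_comm, add_left_comm] using this
  have h3 : Summable (fun k : ℕ => 1 / (2 * ((k:ℝ) + N + 2))) := by
    apply Summable.of_nonneg_of_le (fun k => by positivity) _ h2
    intro k
    have := hlow (k + N + 1) (by omega)
    convert this using 2
    push_cast
    ring
  have h4 : Summable (fun k : ℕ => 1 / ((k:ℝ) + N + 2)) := by
    have := h3.mul_left 2
    convert this using 1
    · rfl
    funext k
    have : (0:ℝ) < (k:ℝ) + N + 2 := by positivity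
    field_simp
  have h5 : Summable (fun k : ℕ => 1 / ((k:ℝ))) := by
    rw [← summable_nat_add_iff (N + 2)]
    convert h4 using 1
    · rfl
    funext k
    push_cast
    ring_nf
  exact Real.not_summable_one_div_natCast h5
end

section
/- Let m_n(γ) = (1/n)∑_{k=1}^n γ^k and n_k = 2^k. Then sup over γ on the unit circle of ∑_{k=1}^∞ |m_{n_{k+1}}(γ) − m_{n_k}(γ)| is finite; in fact it is at most 20. -/
open Finset

private lemma geomAbs9 (γ : ℂ) (h : ‖γ‖ = 1) (hγ : γ ≠ 1) (n : ℕ) :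
    ‖∑ k ∈ Icc 1 n, γ ^ k‖ ≤ 2 / ‖γ - 1‖ := by
  have hδ : γ - 1 ≠ 0 := sub_ne_zero.mpr hγ
  have h1 : ∑ k ∈ Icc 1 n, γ ^ k = γ * ((γ ^ n - 1) / (γ - 1)) := by
    rw [← Finset.Ico_add_one_right_eq_Icc, Finset.sum_Ico_eq_sum_range]
    simp only [Nat.succ_sub_one, Nat.add_sub_cancel, pow_add, pow_one]
    rw [← Finset.mul_sum, geom_sum_eq hγ]
  rw [h1, norm_mul, norm_div, h, one_mul]
  gcongr
  calc ‖γ ^ n - 1‖ ≤ ‖γ ^ n‖ + 1 := by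
        simpa using norm_sub_le (γ ^ n) 1
    _ ≤ 2 := by rw [norm_pow, h, one_pow]; norm_num

private lemma powSub9 (γ : ℂ) (h : ‖γ‖ = 1) (k : ℕ) :
    ‖γ ^ k - 1‖ ≤ k * ‖γ - 1‖ := by
  induction k with
  | zero => simp
  | succ k ih =>
    have : γ ^ (k+1) - 1 = γ * (γ ^ k - 1) + (γ - 1) := by ring
    rw [this]
    calc ‖γ * (γ ^ k - 1) + (γ - 1)‖
        ≤ ‖γ * (γ ^ k - 1)‖ + ‖γ - 1‖ := norm_add_le _ _
      _ ≤ k * ‖γ - 1‖ + ‖γ - 1‖ := by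
          rw [norm_mul, h, one_mul]; gcongr
      _ = (k+1 : ℕ) * ‖γ - 1‖ := by push_cast; ring

private lemma sumSub9 (γ : ℂ) (h : ‖γ‖ = 1) (n : ℕ) :
    ‖∑ k ∈ Icc 1 n, γ ^ k - n‖ ≤ (n * n : ℕ) * ‖γ - 1‖ := by
  have h1 : (∑ k ∈ Icc 1 n, γ ^ k) - n = ∑ k ∈ Icc 1 n, (γ ^ k - 1) := by
    rw [Finset.sum_sub_distrib]
    simp [Nat.card_Icc]
  rw [h1]
  calc ‖∑ k ∈ Icc 1 n, (γ ^ k - 1)‖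
      ≤ ∑ k ∈ Icc 1 n, ‖γ ^ k - 1‖ := norm_sum_le _ _
    _ ≤ ∑ k ∈ Icc 1 n, (k : ℝ) * ‖γ - 1‖ :=
        Finset.sum_le_sum fun k _ => powSub9 γ h k
    _ ≤ ∑ k ∈ Icc 1 n, (n : ℝ) * ‖γ - 1‖ := by
        apply Finset.sum_le_sum
        intro k hk
        have := (Finset.mem_Icc.mp hk).2
        have h2 : (k:ℝ) ≤ (n:ℝ) := by exact_mod_cast this
        exact mul_le_mul_of_nonneg_right h2 (norm_nonneg _)
    _ ≤ (n * n : ℕ) * ‖γ - 1‖ := by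
        rw [Finset.sum_const, Nat.card_Icc]
        push_cast
        rw [nsmul_eq_mul]
        nlinarith [norm_nonneg (γ - 1), Nat.cast_nonneg (α := ℝ) n]

private lemma mBounds9 (m : ℕ → ℂ → ℂ)
    (hm : ∀ n γ, m n γ = (1 / (n : ℂ)) * ∑ k ∈ Finset.Icc 1 n, γ ^ k)
    (γ : ℂ) (h : ‖γ‖ = 1) (hγ : γ ≠ 1) (n : ℕ) (hn : 0 < n) :
    ‖m n γ‖ ≤ 2 / (n * ‖γ - 1‖) ∧
    ‖m n γ - 1‖ ≤ n * ‖γ - 1‖ := by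
  have hn0 : (n:ℂ) ≠ 0 := Nat.cast_ne_zero.mpr hn.ne'
  have hnR : (0:ℝ) < n := Nat.cast_pos.mpr hn
  have hδ : 0 < ‖γ - 1‖ := by
    rw [norm_pos_iff]
    exact sub_ne_zero.mpr hγ
  constructor
  · rw [hm, norm_mul, norm_div, norm_one, Complex.norm_natCast]
    rw [div_mul_eq_mul_div, one_mul]
    rw [div_le_div_iff₀ hnR (by positivity)]
    calc ‖∑ k ∈ Icc 1 n, γ ^ k‖ * (n * ‖γ-1‖)
        ≤ (2 / ‖γ - 1‖) * (n * ‖γ-1‖) := by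
          apply mul_le_mul_of_nonneg_right (geomAbs9 γ h hγ n) (by positivity)
      _ = 2 * n := by field_simp
  · have heq : m n γ - 1 = (1 / (n:ℂ)) * (∑ k ∈ Icc 1 n, γ ^ k - n) := by
      rw [hm]; field_simp
    rw [heq, norm_mul, norm_div, norm_one, Complex.norm_natCast, div_mul_eq_mul_div, one_mul]
    rw [div_le_iff₀ hnR]
    calc ‖∑ k ∈ Icc 1 n, γ ^ k - n‖
        ≤ (n * n : ℕ) * ‖γ-1‖ := sumSub9 γ h n
      _ = n * ‖γ-1‖ * n := by push_cast; ring

private lemma sumMin9 (δ : ℝ) (hδ : 0 < δ) (M : ℕ) :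
    ∑ k ∈ range M, min (6 * δ * 2 ^ k) ((3/2) * (1/2 : ℝ) ^ k / δ) ≤ 12 := by
  set p : ℕ → Prop := fun k => (2:ℝ) ^ (k+1) * δ ≤ 1 with hp
  have hdec : DecidablePred p := fun k => by unfold p; infer_instance
  rw [← Finset.sum_filter_add_sum_filter_not (range M) p]
  have hA : ∑ k ∈ (range M).filter p, min (6 * δ * 2 ^ k) ((3/2) * (1/2 : ℝ) ^ k / δ) ≤ 6 := by
    have step : ∑ k ∈ (range M).filter p, min (6 * δ * 2 ^ k) ((3/2) * (1/2 : ℝ) ^ k / δ)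
        ≤ ∑ k ∈ (range M).filter p, 6 * δ * 2 ^ k :=
      Finset.sum_le_sum fun k _ => min_le_left _ _
    refine step.trans ?_
    rcases ((range M).filter p).eq_empty_or_nonempty with he | hne
    · rw [he]; simp
    · set A := (range M).filter p
      set L := A.max' hne with hL
      have hLp : p L := (Finset.mem_filter.mp (A.max'_mem hne)).2
      have hsub : A ⊆ range (L+1) := by
        intro k hk
        rw [Finset.mem_range]
        exact Nat.lt_succ_of_le (A.le_max' k hk)
      calc ∑ k ∈ A, 6 * δ * 2 ^ k ≤ ∑ k ∈ range (L+1), 6 * δ * 2 ^ k := by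
            apply Finset.sum_le_sum_of_subset_of_nonneg hsub
            intro k _ _; positivity
        _ = 6 * δ * (2 ^ (L+1) - 1) := by
            rw [← Finset.mul_sum, geom_sum_eq (by norm_num)]
            ring
        _ ≤ 6 * δ * 2 ^ (L+1) := by nlinarith [pow_pos (by norm_num : (0:ℝ) < 2) (L+1)]
        _ ≤ 6 := by
            have : (2:ℝ) ^ (L+1) * δ ≤ 1 := hLp
            nlinarith
  have hB : ∑ k ∈ (range M).filter (fun k => ¬ p k),
      min (6 * δ * 2 ^ k) ((3/2) * (1/2 : ℝ) ^ k / δ) ≤ 6 := by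
    have step : ∑ k ∈ (range M).filter (fun k => ¬ p k),
          min (6 * δ * 2 ^ k) ((3/2) * (1/2 : ℝ) ^ k / δ)
        ≤ ∑ k ∈ (range M).filter (fun k => ¬ p k), (3/2) * (1/2 : ℝ) ^ k / δ :=
      Finset.sum_le_sum fun k _ => min_le_right _ _
    refine step.trans ?_
    rcases ((range M).filter (fun k => ¬ p k)).eq_empty_or_nonempty with he | hne
    · rw [he]; simp
    · set B := (range M).filter (fun k => ¬ p k)
      set K := B.min' hne with hK
      have hKp : ¬ p K := (Finset.mem_filter.mp (B.min'_mem hne)).2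
      have hKlt : 1 < (2:ℝ) ^ (K+1) * δ := not_le.mp hKp
      have hsub : B ⊆ Ico K M := by
        intro k hk
        rw [Finset.mem_Ico]
        exact ⟨B.min'_le k hk, Finset.mem_range.mp (Finset.mem_filter.mp hk).1⟩
      have hgeo : ∑ k ∈ B, (1/2:ℝ) ^ k ≤ 4 * δ := by
        calc ∑ k ∈ B, (1/2:ℝ) ^ k ≤ ∑ k ∈ Ico K M, (1/2:ℝ) ^ k := by
              apply Finset.sum_le_sum_of_subset_of_nonneg hsub
              intro k _ _; positivity
          _ = ∑ j ∈ range (M - K), (1/2:ℝ) ^ (K + j) := by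
              rw [Finset.sum_Ico_eq_sum_range]
          _ = (1/2:ℝ) ^ K * ∑ j ∈ range (M - K), (1/2:ℝ) ^ j := by
              rw [Finset.mul_sum]; congr 1; ext j; rw [pow_add]
          _ ≤ (1/2:ℝ) ^ K * 2 := by
              have := sum_geometric_two_le (M - K)
              have h0 : (0:ℝ) ≤ (1/2:ℝ) ^ K := by positivity
              nlinarith [this]
          _ ≤ 4 * δ := by
              have h2 : (1/2:ℝ) ^ K = 1 / 2 ^ K := by rw [div_pow, one_pow]
              rw [h2, div_mul_eq_mul_div, div_le_iff₀ (by positivity)]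
              have : (2:ℝ) ^ (K+1) = 2 ^ K * 2 := by ring
              nlinarith [pow_pos (by norm_num : (0:ℝ) < 2) K]
      calc ∑ k ∈ B, (3/2) * (1/2:ℝ) ^ k / δ = (3/2) / δ * ∑ k ∈ B, (1/2:ℝ) ^ k := by
            rw [Finset.mul_sum]; congr 1; ext k; ring
        _ ≤ (3/2) / δ * (4 * δ) := mul_le_mul_of_nonneg_left hgeo (by positivity)
        _ = 6 := by field_simp; ring
  linarith

theorem stmt_9 (m : ℕ → ℂ → ℂ)
    (hm : ∀ n γ, m n γ = (1 / (n : ℂ)) * ∑ k ∈ Finset.Icc 1 n, γ ^ k) :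
    ∀ γ : ℂ, ‖γ‖ = 1 → ∀ M : ℕ,
      ∑ k ∈ Finset.range M,
        ‖m (2 ^ (k + 2)) γ - m (2 ^ (k + 1)) γ‖ ≤ 20 := by
  intro γ hγabs M
  by_cases hγ : γ = 1
  · subst hγ
    have hzero : ∀ k : ℕ, ‖m (2 ^ (k + 2)) 1 - m (2 ^ (k + 1)) 1‖ = 0 := by
      intro k
      have h1 : ∀ n : ℕ, 0 < n → m n 1 = 1 := by
        intro n hn
        have hn0 : (n:ℂ) ≠ 0 := Nat.cast_ne_zero.mpr hn.ne'
        rw [hm]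
        simp [Nat.card_Icc]
        field_simp
      rw [h1 _ (by positivity), h1 _ (by positivity)]
      simp
    rw [Finset.sum_congr rfl (fun k _ => hzero k)]
    simp
  · set δ := ‖γ - 1‖ with hδdef
    have hδ : 0 < δ := by
      rw [hδdef, norm_pos_iff]
      exact sub_ne_zero.mpr hγ
    have hterm : ∀ k : ℕ, ‖m (2 ^ (k + 2)) γ - m (2 ^ (k + 1)) γ‖
        ≤ min (6 * δ * 2 ^ k) ((3/2) * (1/2 : ℝ) ^ k / δ) := by
      intro k
      have hb1 := mBounds9 m hm γ hγabs hγ (2 ^ (k+1)) (by positivity)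
      have hb2 := mBounds9 m hm γ hγabs hγ (2 ^ (k+2)) (by positivity)
      have hpow : ((2:ℝ) ^ (k+1) : ℝ) = 2 * 2 ^ k := by ring
      have hpow2 : ((2:ℝ) ^ (k+2) : ℝ) = 4 * 2 ^ k := by ring
      have hcast1 : ((2 ^ (k+1) : ℕ) : ℝ) = 2 * 2 ^ k := by push_cast; ring
      have hcast2 : ((2 ^ (k+2) : ℕ) : ℝ) = 4 * 2 ^ k := by push_cast; ring
      have h2k : (0:ℝ) < 2 ^ k := by positivity
      rw [le_min_iff]
      constructor
      · calc ‖m (2 ^ (k + 2)) γ - m (2 ^ (k + 1)) γ‖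
            = ‖(m (2 ^ (k + 2)) γ - 1) - (m (2 ^ (k + 1)) γ - 1)‖ := by ring_nf
          _ ≤ ‖m (2 ^ (k + 2)) γ - 1‖ + ‖m (2 ^ (k + 1)) γ - 1‖ :=
              norm_sub_le _ _
          _ ≤ (2 ^ (k+2) : ℕ) * δ + (2 ^ (k+1) : ℕ) * δ := add_le_add hb2.2 hb1.2
          _ = 6 * δ * 2 ^ k := by rw [hcast1, hcast2]; ring
      · calc ‖m (2 ^ (k + 2)) γ - m (2 ^ (k + 1)) γ‖
            ≤ ‖m (2 ^ (k + 2)) γ‖ + ‖m (2 ^ (k + 1)) γ‖ :=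
              norm_sub_le _ _
          _ ≤ 2 / ((2 ^ (k+2) : ℕ) * δ) + 2 / ((2 ^ (k+1) : ℕ) * δ) := add_le_add hb2.1 hb1.1
          _ = (3/2) * (1/2 : ℝ) ^ k / δ := by
              rw [hcast1, hcast2]
              have h12 : (1/2:ℝ) ^ k = 1 / 2 ^ k := by rw [div_pow, one_pow]
              rw [h12]
              field_simp
              ring
    calc ∑ k ∈ Finset.range M, ‖m (2 ^ (k + 2)) γ - m (2 ^ (k + 1)) γ‖
        ≤ ∑ k ∈ Finset.range M, min (6 * δ * 2 ^ k) ((3/2) * (1/2 : ℝ) ^ k / δ) :=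
          Finset.sum_le_sum fun k _ => hterm k
      _ ≤ 12 := sumMin9 δ hδ M
      _ ≤ 20 := by norm_num
end

section
/- For ε_k = 1/2^k, sup over ℓ ∈ ℤ of ∑_{k=1}^∞ |sin(ℓ/2^{k+1})/(ℓ/2^{k+1}) − sin(ℓ/2^k)/(ℓ/2^k)| is finite (bounded by an absolute constant such as 9). -/
lemma sinc_abs_le' (x : ℝ) : |Real.sin x / x| ≤ 1 / |x| := by
  rw [abs_div]
  rcases eq_or_ne x 0 with h | h
  · simp [h]
  · gcongr
    exact abs_le.mpr ⟨Real.neg_one_le_sin x, Real.sin_le_one x⟩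

lemma sinc_near_one (x : ℝ) (h0 : x ≠ 0) (h1 : |x| ≤ 1) :
    |Real.sin x / x - 1| ≤ x ^ 2 / 4 := by
  have key : ∀ y : ℝ, 0 < y → y ≤ 1 → |Real.sin y / y - 1| ≤ y ^ 2 / 4 := by
    intro y hy hy1
    have hs1 : Real.sin y ≤ y := Real.sin_le hy.le
    have hs2 : y - y ^ 3 / 4 < Real.sin y := by have := Real.sin_gt_sub_cube hy; nlinarith [pow_pos hy 3]
    have h3 : Real.sin y / y ≤ 1 := by rw [div_le_one hy]; exact hs1
    have h4 : 1 - y ^ 2 / 4 ≤ Real.sin y / y := by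
      rw [le_div_iff₀ hy]; nlinarith
    rw [abs_le]
    constructor <;> nlinarith
  rcases h0.lt_or_gt with h | h
  · have := key (-x) (by linarith) (by rwa [abs_of_neg h] at h1)
    rw [Real.sin_neg, neg_div_neg_eq, neg_pow, ] at this
    simpa using this
  · exact key x h (by rwa [abs_of_pos h] at h1)

theorem stmt_15 :
    ∀ ℓ : ℤ, ∀ M : ℕ,
      ∑ k ∈ Finset.range M,
        |Real.sin ((ℓ : ℝ) / 2 ^ (k + 2)) / ((ℓ : ℝ) / 2 ^ (k + 2))
          - Real.sin ((ℓ : ℝ) / 2 ^ (k + 1)) / ((ℓ : ℝ) / 2 ^ (k + 1))| ≤ 9 := by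
  intro ℓ M
  by_cases hℓ : ℓ = 0
  · simp [hℓ]
  · set a : ℕ := ℓ.natAbs with ha_def
    have ha0 : a ≠ 0 := Int.natAbs_ne_zero.mpr hℓ
    have ha1 : (1 : ℝ) ≤ (a : ℝ) := by exact_mod_cast Nat.one_le_iff_ne_zero.mpr ha0
    have haR : (0 : ℝ) < (a : ℝ) := by linarith
    have habs : |(ℓ : ℝ)| = (a : ℝ) := by
      rw [ha_def, Nat.cast_natAbs, Int.cast_abs]
    set K : ℕ := Nat.log 2 a with hK_def
    have hK1 : (2 : ℝ) ^ K ≤ (a : ℝ) := by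
      exact_mod_cast Nat.pow_log_le_self 2 ha0
    have hK2 : (a : ℝ) < 2 ^ (K + 1) := by
      exact_mod_cast Nat.lt_pow_succ_log_self (by norm_num) a
    -- the pointwise bound
    set g : ℕ → ℝ := fun k =>
      (if k < K then 6 * 2 ^ k / (a : ℝ) else 0) +
      (if K ≤ k then (5 / 16) * (1 / 4 : ℝ) ^ (k - K) else 0) with hg_def
    have hbound : ∀ k,
        |Real.sin ((ℓ : ℝ) / 2 ^ (k + 2)) / ((ℓ : ℝ) / 2 ^ (k + 2))
          - Real.sin ((ℓ : ℝ) / 2 ^ (k + 1)) / ((ℓ : ℝ) / 2 ^ (k + 1))| ≤ g k := by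
      intro k
      have hp1 : (0 : ℝ) < 2 ^ (k + 1) := by positivity
      have hp2 : (0 : ℝ) < 2 ^ (k + 2) := by positivity
      have hx1 : ((ℓ : ℝ) / 2 ^ (k + 2)) ≠ 0 := by
        apply div_ne_zero _ (ne_of_gt hp2)
        exact_mod_cast hℓ
      have hx2 : ((ℓ : ℝ) / 2 ^ (k + 1)) ≠ 0 := by
        apply div_ne_zero _ (ne_of_gt hp1)
        exact_mod_cast hℓ
      have habs1 : |(ℓ : ℝ) / 2 ^ (k + 2)| = (a : ℝ) / 2 ^ (k + 2) := by
        rw [abs_div, habs, abs_of_pos hp2]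
      have habs2 : |(ℓ : ℝ) / 2 ^ (k + 1)| = (a : ℝ) / 2 ^ (k + 1) := by
        rw [abs_div, habs, abs_of_pos hp1]
      rcases lt_or_ge k K with hk | hk
      · -- small k : use |sin x / x| ≤ 1/|x|
        have t1 := sinc_abs_le' ((ℓ : ℝ) / 2 ^ (k + 2))
        have t2 := sinc_abs_le' ((ℓ : ℝ) / 2 ^ (k + 1))
        rw [habs1, one_div_div] at t1
        rw [habs2, one_div_div] at t2
        have := abs_sub (Real.sin ((ℓ : ℝ) / 2 ^ (k + 2)) / ((ℓ : ℝ) / 2 ^ (k + 2)))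
          (Real.sin ((ℓ : ℝ) / 2 ^ (k + 1)) / ((ℓ : ℝ) / 2 ^ (k + 1)))
        have hsum : |Real.sin ((ℓ : ℝ) / 2 ^ (k + 2)) / ((ℓ : ℝ) / 2 ^ (k + 2))
            - Real.sin ((ℓ : ℝ) / 2 ^ (k + 1)) / ((ℓ : ℝ) / 2 ^ (k + 1))|
            ≤ 2 ^ (k + 2) / (a : ℝ) + 2 ^ (k + 1) / (a : ℝ) := by
          calc _ ≤ _ := abs_sub _ _
            _ ≤ _ := add_le_add t1 t2
        simp only [hg_def, if_pos hk, if_neg (not_le.mpr hk), add_zero]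
        calc _ ≤ 2 ^ (k + 2) / (a : ℝ) + 2 ^ (k + 1) / (a : ℝ) := hsum
          _ = 6 * 2 ^ k / (a : ℝ) := by ring
      · -- large k : use |sin x / x - 1| ≤ x^2/4
        have hlt2 : |(ℓ : ℝ) / 2 ^ (k + 1)| ≤ 1 := by
          rw [habs2, div_le_one hp1]
          calc (a : ℝ) ≤ 2 ^ (K + 1) := le_of_lt hK2
            _ ≤ 2 ^ (k + 1) := by
              apply pow_le_pow_right₀ (by norm_num)
              omega
        have hlt1 : |(ℓ : ℝ) / 2 ^ (k + 2)| ≤ 1 := by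
          rw [habs1, div_le_one hp2]
          calc (a : ℝ) ≤ 2 ^ (K + 1) := le_of_lt hK2
            _ ≤ 2 ^ (k + 2) := by
              apply pow_le_pow_right₀ (by norm_num)
              omega
        have t1 := sinc_near_one _ hx1 hlt1
        have t2 := sinc_near_one _ hx2 hlt2
        have hsum : |Real.sin ((ℓ : ℝ) / 2 ^ (k + 2)) / ((ℓ : ℝ) / 2 ^ (k + 2))
            - Real.sin ((ℓ : ℝ) / 2 ^ (k + 1)) / ((ℓ : ℝ) / 2 ^ (k + 1))|
            ≤ ((ℓ : ℝ) / 2 ^ (k + 2)) ^ 2 / 4 + ((ℓ : ℝ) / 2 ^ (k + 1)) ^ 2 / 4 := by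
          calc _ = |(Real.sin ((ℓ : ℝ) / 2 ^ (k + 2)) / ((ℓ : ℝ) / 2 ^ (k + 2)) - 1)
              - (Real.sin ((ℓ : ℝ) / 2 ^ (k + 1)) / ((ℓ : ℝ) / 2 ^ (k + 1)) - 1)| := by
                ring_nf
            _ ≤ _ := abs_sub _ _
            _ ≤ _ := add_le_add t1 t2
        have hsq1 : ((ℓ : ℝ) / 2 ^ (k + 2)) ^ 2 = (a : ℝ) ^ 2 / (2 ^ (k + 2)) ^ 2 := by
          rw [div_pow]
          congr 1
          rw [← sq_abs, habs]
        have hsq2 : ((ℓ : ℝ) / 2 ^ (k + 1)) ^ 2 = (a : ℝ) ^ 2 / (2 ^ (k + 1)) ^ 2 := by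
          rw [div_pow]
          congr 1
          rw [← sq_abs, habs]
        have ha2 : (a : ℝ) ^ 2 ≤ (2 ^ (K + 1)) ^ 2 := by nlinarith
        simp only [hg_def, if_neg (not_lt.mpr hk), if_pos hk, zero_add]
        have hkey : ((ℓ : ℝ) / 2 ^ (k + 2)) ^ 2 / 4 + ((ℓ : ℝ) / 2 ^ (k + 1)) ^ 2 / 4
            ≤ (5 / 16) * (1 / 4 : ℝ) ^ (k - K) := by
          rw [hsq1, hsq2]
          have hKk : k = K + (k - K) := by omega
          have hpow : ((2 : ℝ) ^ (k + 1)) ^ 2 = (2 ^ (K + 1)) ^ 2 * 4 ^ (k - K) := by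
            rw [hKk]
            rw [show K + (k - K) + 1 = (K + 1) + (k - K) by ring, pow_add]
            rw [mul_pow]
            congr 1
            rw [← pow_mul, show (k - K) * 2 = 2 * (k - K) by ring, pow_mul]
            norm_num
          have hpow2 : ((2 : ℝ) ^ (k + 2)) ^ 2 = 4 * ((2 ^ (K + 1)) ^ 2 * 4 ^ (k - K)) := by
            rw [show k + 2 = (k + 1) + 1 by ring, pow_add, mul_pow, hpow]
            ring
          rw [hpow, hpow2]
          have h4 : (0 : ℝ) < 4 ^ (k - K) := by positivity
          have hB : (0 : ℝ) < (2 ^ (K + 1) : ℝ) ^ 2 := by positivity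
          have hfrac : ((1 : ℝ) / 4) ^ (k - K) = 1 / 4 ^ (k - K) := by
            rw [div_pow, one_pow]
          rw [hfrac]
          have heq : (a : ℝ) ^ 2 / (4 * ((2 ^ (K + 1)) ^ 2 * 4 ^ (k - K))) / 4
              + (a : ℝ) ^ 2 / ((2 ^ (K + 1)) ^ 2 * 4 ^ (k - K)) / 4
              = (5 / 16) * ((a : ℝ) ^ 2 / ((2 ^ (K + 1)) ^ 2 * 4 ^ (k - K))) := by
            field_simp
            ring
          rw [heq]
          apply mul_le_mul_of_nonneg_left _ (by norm_num)
          rw [div_le_div_iff₀ (by positivity) h4]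
          nlinarith [mul_le_mul_of_nonneg_right ha2 h4.le]
        exact hsum.trans hkey
    -- sum the bound
    have hsum_g : ∑ k ∈ Finset.range M, g k ≤ 9 := by
      rw [hg_def]
      rw [Finset.sum_add_distrib]
      have part1 : ∑ k ∈ Finset.range M, (if k < K then 6 * 2 ^ k / (a : ℝ) else 0) ≤ 6 := by
        rw [← Finset.sum_filter]
        have hsub : (Finset.range M).filter (· < K) ⊆ Finset.range K := by
          intro x hx
          simp only [Finset.mem_filter, Finset.mem_range] at hx ⊢
          exact hx.2
        calc ∑ k ∈ (Finset.range M).filter (· < K), 6 * 2 ^ k / (a : ℝ)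
            ≤ ∑ k ∈ Finset.range K, 6 * 2 ^ k / (a : ℝ) := by
              apply Finset.sum_le_sum_of_subset_of_nonneg hsub
              intro i _ _
              positivity
          _ = 6 * (∑ k ∈ Finset.range K, (2 : ℝ) ^ k) / (a : ℝ) := by
              rw [← Finset.sum_div, Finset.mul_sum]
          _ = 6 * ((2 : ℝ) ^ K - 1) / (a : ℝ) := by
              rw [geom_sum_eq (by norm_num : (2 : ℝ) ≠ 1)]
              norm_num
          _ ≤ 6 := by
              rw [div_le_iff₀ haR]
              nlinarith
      have part2 : ∑ k ∈ Finset.range M, (if K ≤ k then (5 / 16) * (1 / 4 : ℝ) ^ (k - K) else 0) ≤ 5 / 12 := by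
        have hmono : ∑ k ∈ Finset.range M, (if K ≤ k then (5 / 16) * (1 / 4 : ℝ) ^ (k - K) else 0)
            ≤ ∑ k ∈ Finset.range (K + M), (if K ≤ k then (5 / 16) * (1 / 4 : ℝ) ^ (k - K) else 0) := by
          apply Finset.sum_le_sum_of_subset_of_nonneg
          · apply Finset.range_subset_range.mpr; omega
          · intro i _ _
            split <;> positivity
        calc _ ≤ _ := hmono
          _ = ∑ k ∈ Finset.range K, (if K ≤ k then (5 / 16) * (1 / 4 : ℝ) ^ (k - K) else 0)
              + ∑ j ∈ Finset.range M, (if K ≤ K + j then (5 / 16) * (1 / 4 : ℝ) ^ (K + j - K) else 0) := by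
              rw [Finset.sum_range_add]
          _ = 0 + ∑ j ∈ Finset.range M, (5 / 16) * (1 / 4 : ℝ) ^ j := by
              congr 1
              · apply Finset.sum_eq_zero
                intro i hi
                rw [if_neg]
                simp only [Finset.mem_range] at hi
                omega
              · apply Finset.sum_congr rfl
                intro j _
                rw [if_pos (by omega)]
                congr 2
                omega
          _ = (5 / 16) * ∑ j ∈ Finset.range M, (1 / 4 : ℝ) ^ j := by
              rw [zero_add, Finset.mul_sum]
          _ ≤ (5 / 16) * (4 / 3) := by
              apply mul_le_mul_of_nonneg_left _ (by norm_num)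
              rw [geom_sum_eq (by norm_num : (1 / 4 : ℝ) ≠ 1)]
              have : (0 : ℝ) ≤ (1 / 4 : ℝ) ^ M := by positivity
              rw [div_le_iff_of_neg (by norm_num : (1 / 4 : ℝ) - 1 < 0)]
              linarith
          _ ≤ 5 / 12 := by norm_num
      linarith
    calc _ ≤ ∑ k ∈ Finset.range M, g k := Finset.sum_le_sum (fun k _ => hbound k)
      _ ≤ 9 := hsum_g
end

section
/- For ε_k = 1/k, sup over positive integers ℓ of ∑_{k=1}^∞ |sin(ℓ/(k+1))/(ℓ/(k+1)) − sin(ℓ/k)/(ℓ/k)| is infinite. -/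
open Real Finset

lemma aux_sin (m : ℕ) (x : ℝ) (h1 : (4*m+1)*π/4 ≤ x) (h2 : x ≤ (4*m+3)*π/4) :
    Real.sqrt 2 / 2 ≤ (-1:ℝ)^m * Real.sin x := by
  have h := Real.sin_add_int_mul_pi (x - m*π) m
  push_cast at h
  rw [zpow_natCast] at h
  rw [sub_add_cancel] at h
  have key : (-1:ℝ)^m * Real.sin x = Real.sin (x - m*π) := by
    rw [h, ← mul_assoc, ← pow_add, ← two_mul, pow_mul]
    norm_num
  rw [key]
  set y := x - m*π with hy
  have hy1 : π/4 ≤ y := by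
    have h' : ((4*m+1):ℝ)*π/4 = m*π + π/4 := by push_cast; ring
    rw [h'] at h1; simp only [hy]; linarith
  have hy2 : y ≤ 3*π/4 := by
    have h' : ((4*m+3):ℝ)*π/4 = m*π + 3*π/4 := by push_cast; ring
    rw [h'] at h2; simp only [hy]; linarith
  have hc : Real.sin y = Real.cos (π/2 - y) := (Real.cos_pi_div_two_sub y).symm
  rw [hc, ← Real.cos_abs (π/2 - y), ← Real.cos_pi_div_four]
  apply Real.cos_le_cos_of_nonneg_of_le_pi (abs_nonneg _)
  · linarith [Real.pi_pos]
  · rw [abs_le]; constructor <;> linarith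

lemma aux_tel (f : ℕ → ℝ) (a b : ℕ) (hab : a ≤ b) :
    |f b - f a| ≤ ∑ k ∈ Finset.Ico a b, |f (k+1) - f k| := by
  have h : f b - f a = ∑ k ∈ Finset.Ico a b, (f (k+1) - f k) := by
    rw [Finset.sum_Ico_eq_sub _ hab, Finset.sum_range_sub, Finset.sum_range_sub]; ring
  rw [h]
  exact Finset.abs_sum_le_sum_abs _ _

lemma aux_harm (C : ℝ) : ∃ K : ℕ, C < ∑ m ∈ Finset.range K, 1/(8*((m:ℝ)+2)) := by
  have h := Real.tendsto_sum_range_one_div_nat_succ_atTop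
  have heq : ∀ n, ∑ i ∈ Finset.range n, 1/(8*((i:ℝ)+2))
      = (1/8) * ((∑ i ∈ Finset.range (n+1), 1/((i:ℝ)+1)) + (-1)) := by
    intro n
    rw [Finset.sum_range_succ']
    push_cast
    rw [mul_add, mul_add, Finset.mul_sum]
    norm_num
    apply Finset.sum_congr rfl; intro i _; ring
  have hg := h.comp (Filter.tendsto_add_atTop_nat 1)
  have h3 := Filter.tendsto_atTop_add_const_right Filter.atTop (-1) hg
  have h4 := h3.const_mul_atTop (by norm_num : (0:ℝ) < 1/8)
  have h2 : Filter.Tendsto (fun n => ∑ i ∈ Finset.range n, 1/(8*((i:ℝ)+2)))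
      Filter.atTop Filter.atTop := by
    refine h4.congr fun n => ?_
    simp only [Function.comp]
    exact (heq n).symm
  obtain ⟨K, hK⟩ := (Filter.tendsto_atTop.1 h2 (C+1)).exists
  exact ⟨K, by linarith⟩

theorem stmt_16 :
    ∀ C : ℝ, ∃ ℓ : ℕ, 0 < ℓ ∧ ∃ M : ℕ,
      C < ∑ k ∈ Finset.range M,
        |Real.sin ((ℓ : ℝ) / (k + 2)) / ((ℓ : ℝ) / (k + 2))
          - Real.sin ((ℓ : ℝ) / (k + 1)) / ((ℓ : ℝ) / (k + 1))| := by
  intro C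
  obtain ⟨K, hK⟩ := aux_harm C
  refine ⟨⌈((4*K+3):ℝ)^2 * π⌉₊ + 1, Nat.succ_pos _, ?_⟩
  set ℓ : ℕ := ⌈((4*K+3):ℝ)^2 * π⌉₊ + 1 with hℓ
  set L : ℝ := (ℓ : ℝ) with hLdef
  have hL : 0 < L := by positivity
  have hLbig : ((4*K+3):ℝ)^2 * π ≤ L := by
    have h1 : ((4*K+3):ℝ)^2 * π ≤ (⌈((4*K+3):ℝ)^2 * π⌉₊ : ℝ) := Nat.le_ceil _
    have h2 : L = (⌈((4*K+3):ℝ)^2 * π⌉₊ : ℝ) + 1 := by rw [hLdef, hℓ]; push_cast; ring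
    linarith
  have hkey : ∀ m : ℕ, m ≤ K → ((4*m+1):ℝ)*(4*m+3)*π ≤ 8*L := by
    intro m hm
    have hm' : (m:ℝ) ≤ K := by exact_mod_cast hm
    have h1 : ((4*m+1):ℝ)*(4*m+3) ≤ ((4*K+3):ℝ)^2 := by nlinarith
    nlinarith [Real.pi_pos, hL]
  set n : ℕ → ℕ := fun m => ⌈4*L/(((4*m+3):ℝ)*π)⌉₊ with hn
  have hd : ∀ m : ℕ, (0:ℝ) < ((4*m+3):ℝ)*π := by
    intro m; positivity
  have hq : ∀ m : ℕ, (0:ℝ) < 4*L/(((4*m+3):ℝ)*π) := by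
    intro m; positivity
  have hn1 : ∀ m : ℕ, 1 ≤ n m := by
    intro m; exact Nat.ceil_pos.2 (hq m)
  have hnpos : ∀ m : ℕ, (0:ℝ) < (n m : ℝ) := by
    intro m; exact_mod_cast hn1 m
  have hub : ∀ m : ℕ, L/(n m) ≤ ((4*m+3):ℝ)*π/4 := by
    intro m
    rw [div_le_iff₀ (hnpos m)]
    have h1 : 4*L/(((4*m+3):ℝ)*π) ≤ (n m : ℝ) := Nat.le_ceil _
    rw [div_le_iff₀ (hd m)] at h1
    nlinarith
  have hlb : ∀ m : ℕ, m ≤ K → ((4*m+1):ℝ)*π/4 ≤ L/(n m) := by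
    intro m hm
    rw [le_div_iff₀ (hnpos m)]
    have h1 : (n m : ℝ) < 4*L/(((4*m+3):ℝ)*π) + 1 := Nat.ceil_lt_add_one (le_of_lt (hq m))
    have hk := hkey m hm
    have h43 : (0:ℝ) < (4*m+3:ℝ) := by positivity
    have e : ((4*m+1):ℝ)*π/4 * (4*L/(((4*m+3):ℝ)*π) + 1)
        = (4*m+1)*L/(4*m+3) + (4*m+1)*π/4 := by
      field_simp
    have step : ((4*m+1):ℝ)*π/4 * ((n m):ℝ) ≤ (4*m+1)*L/(4*m+3) + (4*m+1)*π/4 := by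
      rw [← e]
      apply mul_le_mul_of_nonneg_left (le_of_lt h1) (by positivity)
    have h2 : ((4*m+1):ℝ)*L/(4*m+3) = L - 2*L/(4*m+3) := by
      field_simp; ring
    have h3 : ((4*m+1):ℝ)*π/4 ≤ 2*L/(4*m+3) := by
      rw [div_le_div_iff₀ (by norm_num) h43]
      nlinarith
    rw [h2] at step
    linarith
  have hdec : ∀ m : ℕ, m < K → n (m+1) < n m := by
    intro m hm
    have h1 := hub m
    have h2 := hlb (m+1) hm
    have h3 : L/(n m) < L/(n (m+1)) := by
      push_cast at h2
      nlinarith [Real.pi_pos]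
    have h4 : (n (m+1) : ℝ) < (n m : ℝ) := by
      have := (div_lt_div_iff₀ (hnpos m) (hnpos (m+1))).1 h3
      nlinarith
    exact_mod_cast h4
  set F : ℕ → ℝ := fun j => Real.sin (L/j) / (L/j) with hF
  have hFm : ∀ m : ℕ, m ≤ K → 1/(8*((m:ℝ)+1)) ≤ (-1:ℝ)^m * F (n m) := by
    intro m hm
    have hx1 := hlb m hm
    have hx2 := hub m
    have hxpos : 0 < L/(n m) := div_pos hL (hnpos m)
    have hs := aux_sin m (L/(n m)) (by push_cast at hx1 ⊢; linarith) (by push_cast at hx2 ⊢; linarith)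
    have heq : (-1:ℝ)^m * F (n m) = ((-1:ℝ)^m * Real.sin (L/(n m)))/(L/(n m)) := by
      rw [hF]; ring
    rw [heq]
    have hsqrt : (1:ℝ) ≤ Real.sqrt 2 := by
      rw [show (1:ℝ) = Real.sqrt 1 from (Real.sqrt_one).symm]
      exact Real.sqrt_le_sqrt (by norm_num)
    have h2 : (1:ℝ)/2 ≤ (-1:ℝ)^m * Real.sin (L/(n m)) := by linarith
    have hxle : L/(n m) ≤ 4*((m:ℝ)+1) := by
      have hp4 := Real.pi_le_four
      nlinarith [hx2]
    rw [div_le_div_iff₀ (by positivity) hxpos]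
    nlinarith [(Nat.cast_nonneg m : (0:ℝ) ≤ (m:ℝ))]
  have hpair : ∀ m : ℕ, m < K → 1/(8*((m:ℝ)+2)) ≤ |F (n m) - F (n (m+1))| := by
    intro m hm
    have h1 := hFm m (le_of_lt hm)
    have h2 := hFm (m+1) hm
    have hsgn : (-1:ℝ)^m * (F (n m) - F (n (m+1)))
        = (-1:ℝ)^m * F (n m) + (-1:ℝ)^(m+1) * F (n (m+1)) := by
      rw [pow_succ]; ring
    have habs : (-1:ℝ)^m * (F (n m) - F (n (m+1))) ≤ |F (n m) - F (n (m+1))| := by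
      calc (-1:ℝ)^m * (F (n m) - F (n (m+1)))
          ≤ |(-1:ℝ)^m * (F (n m) - F (n (m+1)))| := le_abs_self _
        _ = |F (n m) - F (n (m+1))| := by
            rw [abs_mul, abs_pow, abs_neg, abs_one, one_pow, one_mul]
    push_cast at h2
    have h1' : (0:ℝ) < 1/(8*((m:ℝ)+1)) := by positivity
    have : ((m:ℝ)+1+1) = (m:ℝ)+2 := by ring
    rw [this] at h2
    linarith
  set G : ℕ → ℝ := fun k => |F (k+2) - F (k+1)| with hG
  have hblock : ∀ m : ℕ, m < K →
      |F (n m) - F (n (m+1))| ≤ ∑ k ∈ Finset.Ico (n (m+1) - 1) (n m - 1), G k := by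
    intro m hm
    have h := aux_tel (fun k => F (k+1)) (n (m+1) - 1) (n m - 1)
      (Nat.sub_le_sub_right (le_of_lt (hdec m hm)) 1)
    have e1 : n m - 1 + 1 = n m := Nat.sub_add_cancel (hn1 m)
    have e2 : n (m+1) - 1 + 1 = n (m+1) := Nat.sub_add_cancel (hn1 (m+1))
    simp only [e1, e2] at h
    exact h
  have hle0 : ∀ j : ℕ, j ≤ K → n j ≤ n 0 := by
    intro j
    induction j with
    | zero => intro _; exact le_rfl
    | succ j ih =>
      intro hj
      exact le_trans (le_of_lt (hdec j hj)) (ih (le_of_lt hj))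
  have hchain : ∀ j : ℕ, j ≤ K →
      ∑ m ∈ Finset.range j, (∑ k ∈ Finset.Ico (n (m+1) - 1) (n m - 1), G k)
      = ∑ k ∈ Finset.Ico (n j - 1) (n 0 - 1), G k := by
    intro j
    induction j with
    | zero => intro _; simp
    | succ j ih =>
      intro hj
      rw [Finset.sum_range_succ, ih (le_of_lt hj)]
      rw [add_comm]
      apply Finset.sum_Ico_consecutive
      · exact Nat.sub_le_sub_right (le_of_lt (hdec j hj)) 1
      · exact Nat.sub_le_sub_right (hle0 j (le_of_lt hj)) 1
  refine ⟨n 0, ?_⟩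
  have hterm : ∀ k : ℕ,
      |Real.sin ((ℓ : ℝ) / (k + 2)) / ((ℓ : ℝ) / (k + 2))
        - Real.sin ((ℓ : ℝ) / (k + 1)) / ((ℓ : ℝ) / (k + 1))| = G k := by
    intro k
    rw [hG, hF, hLdef]
    push_cast
    ring_nf
  calc C < ∑ m ∈ Finset.range K, 1/(8*((m:ℝ)+2)) := hK
    _ ≤ ∑ m ∈ Finset.range K, |F (n m) - F (n (m+1))| := by
        apply Finset.sum_le_sum
        intro m hm
        exact hpair m (Finset.mem_range.1 hm)
    _ ≤ ∑ m ∈ Finset.range K, (∑ k ∈ Finset.Ico (n (m+1) - 1) (n m - 1), G k) := by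
        apply Finset.sum_le_sum
        intro m hm
        exact hblock m (Finset.mem_range.1 hm)
    _ = ∑ k ∈ Finset.Ico (n K - 1) (n 0 - 1), G k := hchain K le_rfl
    _ ≤ ∑ k ∈ Finset.range (n 0), G k := by
        apply Finset.sum_le_sum_of_subset_of_nonneg
        · intro k hk
          rw [Finset.mem_range]
          have := (Finset.mem_Ico.1 hk).2
          omega
        · intro k _ _
          exact abs_nonneg _
    _ = ∑ k ∈ Finset.range (n 0),
        |Real.sin ((ℓ : ℝ) / (k + 2)) / ((ℓ : ℝ) / (k + 2))
          - Real.sin ((ℓ : ℝ) / (k + 1)) / ((ℓ : ℝ) / (k + 1))| := by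
        apply Finset.sum_congr rfl
        intro k _
        exact (hterm k).symm
end

section
/- Let ψ_ε = φ_ε * φ_ε where φ_ε is the normalized indicator (1/(2ε))1_{[−ε,ε]}, so ψ̂_ε(ℓ) = (sin(ℓε)/(ℓε))². If (ε_k) is a non-increasing sequence of positive reals tending to 0, then sup over ℓ ∈ ℤ of ∑_{k=1}^∞ |(sin(ℓε_k)/(ℓε_k))² − (sin(ℓε_{k+1})/(ℓε_{k+1}))²| is finite. -/
noncomputable def gFun : ℝ → ℝ := fun x => (Real.sin x / x) ^ 2
noncomputable def gDer : ℝ → ℝ := fun x =>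
  2 * (Real.sin x / x) * ((Real.cos x * x - Real.sin x * 1) / x ^ 2)

lemma gFun_hasDeriv {x : ℝ} (hx : x ≠ 0) : HasDerivAt gFun (gDer x) x := by
  have h1 : HasDerivAt (fun y : ℝ => Real.sin y / y)
      ((Real.cos x * x - Real.sin x * 1) / x ^ 2) x :=
    (Real.hasDerivAt_sin x).div (hasDerivAt_id x) hx
  have := h1.fun_pow 2
  rw [show gFun = fun x => (Real.sin x / x) ^ 2 from rfl]
  simpa [gFun, gDer, mul_comm, mul_assoc, mul_left_comm] using this

lemma gFun_even (x : ℝ) : gFun (-x) = gFun x := by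
  simp [gFun, neg_div_neg_eq]

lemma gFun_abs (x : ℝ) : gFun |x| = gFun x := by
  rcases abs_cases x with ⟨h, _⟩ | ⟨h, _⟩
  · rw [h]
  · rw [h, gFun_even]

lemma gDer_abs_eq {x : ℝ} (hx : x ≠ 0) :
    |gDer x| = 2 * |Real.sin x / x| * (|Real.cos x * x - Real.sin x| / x ^ 2) := by
  unfold gDer
  rw [mul_one, abs_mul, abs_mul, abs_div, abs_div, abs_of_pos (by positivity : (0:ℝ) < x ^ 2)]
  norm_num

lemma gDer_bound_small {x : ℝ} (h0 : 0 < x) (h1 : x ≤ 1) : |gDer x| ≤ 4 := by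
  have hsnn : 0 ≤ Real.sin x :=
    Real.sin_nonneg_of_nonneg_of_le_pi h0.le (by linarith [Real.pi_gt_three])
  have hsle : Real.sin x ≤ x := Real.sin_le h0.le
  have hs : |Real.sin x / x| ≤ 1 := by
    rw [abs_div, abs_of_pos h0, div_le_one h0, abs_of_nonneg hsnn]; exact hsle
  have hd : |Real.cos x * x - Real.sin x| ≤ x ^ 3 / 2 := by
    rw [abs_le]
    constructor
    · have hc := Real.one_sub_sq_div_two_le_cos (x := x)
      nlinarith
    · have hs3 := Real.sin_gt_sub_cube h0
      have hc1 := Real.cos_le_one x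
      nlinarith
  calc |gDer x| = 2 * |Real.sin x / x| * (|Real.cos x * x - Real.sin x| / x ^ 2) :=
        gDer_abs_eq h0.ne'
    _ ≤ 2 * 1 * ((x ^ 3 / 2) / x ^ 2) := by gcongr <;> positivity
    _ = x := by field_simp
    _ ≤ 4 := by linarith

lemma gDer_bound_large {x : ℝ} (h1 : 1 ≤ x) : |gDer x| ≤ 4 / x ^ 2 := by
  have h0 : 0 < x := lt_of_lt_of_le one_pos h1
  have hs : |Real.sin x / x| ≤ 1 / x := by
    rw [abs_div, abs_of_pos h0]
    gcongr
    exact Real.abs_sin_le_one x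
  have hd : |Real.cos x * x - Real.sin x| ≤ 2 * x := by
    calc |Real.cos x * x - Real.sin x| ≤ |Real.cos x * x| + |Real.sin x| := abs_sub _ _
      _ ≤ 1 * x + 1 := by
          gcongr
          · rw [abs_mul, abs_of_pos h0]
            gcongr
            exact Real.abs_cos_le_one x
          · exact Real.abs_sin_le_one x
      _ ≤ 2 * x := by linarith
  calc |gDer x| = 2 * |Real.sin x / x| * (|Real.cos x * x - Real.sin x| / x ^ 2) :=
        gDer_abs_eq h0.ne'
    _ ≤ 2 * (1 / x) * ((2 * x) / x ^ 2) := by gcongr <;> positivity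
    _ = 4 / x ^ 2 := by field_simp; ring

lemma key_small {a b : ℝ} (hb : 0 < b) (hba : b ≤ a) (ha : a ≤ 1) :
    |gFun a - gFun b| ≤ 4 * a - 4 * b := by
  have h := Convex.norm_image_sub_le_of_norm_hasDerivWithin_le
    (f := gFun) (f' := gDer) (s := Set.Icc b a) (C := 4)
    (fun x hx => (gFun_hasDeriv (ne_of_gt (lt_of_lt_of_le hb hx.1))).hasDerivWithinAt)
    (fun x hx => by
      rw [Real.norm_eq_abs]
      exact gDer_bound_small (lt_of_lt_of_le hb hx.1) (le_trans hx.2 ha))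
    (convex_Icc b a) ⟨le_refl b, hba⟩ ⟨hba, le_refl a⟩
  rw [Real.norm_eq_abs, Real.norm_eq_abs, abs_of_nonneg (by linarith : (0:ℝ) ≤ a - b)] at h
  linarith

lemma key_large_aux {a b : ℝ} (hb : 1 ≤ b) (hba : b ≤ a) {c : ℝ} (hc : c = 1 ∨ c = -1) :
    c * (gFun a - gFun b) ≤ 4 / b - 4 / a := by
  set F : ℝ → ℝ := fun x => -(4 / x) - c * gFun x with hF
  have hder : ∀ x : ℝ, 1 ≤ x → HasDerivAt F (4 / x ^ 2 - c * gDer x) x := by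
    intro x hx
    have h0 : x ≠ 0 := by positivity
    have h1 : HasDerivAt (fun y : ℝ => -(4 / y)) (4 / x ^ 2) x := by
      have h := ((hasDerivAt_inv h0).const_mul (4 : ℝ)).fun_neg
      have e : -(4 * -(x ^ 2)⁻¹) = 4 / x ^ 2 := by field_simp
      rw [e] at h
      simpa [div_eq_mul_inv] using h
    exact h1.sub ((gFun_hasDeriv h0).const_mul c)
  have hmem : ∀ x ∈ Set.Icc b a, (1:ℝ) ≤ x := fun x hx => le_trans hb hx.1
  have hmono : MonotoneOn F (Set.Icc b a) := by
    apply monotoneOn_of_deriv_nonneg (convex_Icc b a)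
    · exact fun x hx => ((hder x (hmem x hx)).continuousAt).continuousWithinAt
    · intro x hx
      rw [interior_Icc] at hx
      exact ((hder x (hmem x (Set.mem_Icc_of_Ioo hx))).differentiableAt).differentiableWithinAt
    · intro x hx
      rw [interior_Icc] at hx
      have h1x : 1 ≤ x := hmem x (Set.mem_Icc_of_Ioo hx)
      rw [(hder x h1x).deriv]
      have hbd := gDer_bound_large h1x
      have : c * gDer x ≤ |gDer x| := by
        rcases hc with rfl | rfl
        · simpa using le_abs_self _
        · simpa using neg_le_abs _
      linarith
  have := hmono ⟨le_refl b, hba⟩ ⟨hba, le_refl a⟩ hba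
  simp only [hF] at this
  linarith

lemma key_large {a b : ℝ} (hb : 1 ≤ b) (hba : b ≤ a) :
    |gFun a - gFun b| ≤ 4 / b - 4 / a := by
  rw [abs_le]
  constructor
  · have := key_large_aux hb hba (Or.inr rfl : (-1:ℝ) = 1 ∨ (-1:ℝ) = -1)
    linarith
  · have := key_large_aux hb hba (Or.inl rfl : (1:ℝ) = 1 ∨ (1:ℝ) = -1)
    linarith

noncomputable def VFun : ℝ → ℝ := fun x => if x ≤ 1 then 4 * x else 8 - 4 / x

lemma key {a b : ℝ} (hb : 0 < b) (hba : b ≤ a) :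
    |gFun a - gFun b| ≤ VFun a - VFun b := by
  rcases le_or_gt a 1 with h | h
  · simp only [VFun]
    rw [if_pos h, if_pos (hba.trans h)]
    exact key_small hb hba h
  · rcases le_or_gt b 1 with h2 | h2
    · have e1 : |gFun a - gFun 1| ≤ 4 / 1 - 4 / a := key_large le_rfl h.le
      have e2 : |gFun 1 - gFun b| ≤ 4 * 1 - 4 * b := key_small hb h2 le_rfl
      have e3 := abs_sub_le (gFun a) (gFun 1) (gFun b)
      simp only [VFun]
      rw [if_neg (not_le.mpr h), if_pos h2]
      norm_num at e1 e2 ⊢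
      linarith
    · simp only [VFun]
      rw [if_neg (not_le.mpr h), if_neg (not_le.mpr h2)]
      have := key_large h2.le hba
      linarith

lemma VFun_nonneg {x : ℝ} (hx : 0 < x) : 0 ≤ VFun x := by
  rw [VFun]
  split_ifs with h
  · linarith
  · push_neg at h
    have : 4 / x ≤ 4 := by
      rw [div_le_iff₀ (by linarith)]
      nlinarith
    linarith

lemma VFun_le {x : ℝ} (hx : 0 < x) : VFun x ≤ 8 := by
  rw [VFun]
  split_ifs with h
  · linarith
  · have : 0 ≤ 4 / x := by positivity
    linarith

open Filter in
theorem stmt_18 (ε : ℕ → ℝ) (hpos : ∀ k, 0 < ε k)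
    (hmono : ∀ k, ε (k + 1) ≤ ε k)
    (hlim : Tendsto ε atTop (nhds 0)) :
    ∃ C : ℝ, ∀ ℓ : ℤ, ∀ M : ℕ,
      ∑ k ∈ Finset.range M,
        |(Real.sin ((ℓ : ℝ) * ε k) / ((ℓ : ℝ) * ε k)) ^ 2
          - (Real.sin ((ℓ : ℝ) * ε (k + 1)) / ((ℓ : ℝ) * ε (k + 1))) ^ 2| ≤ C := by
  refine ⟨8, fun ℓ M => ?_⟩
  rcases eq_or_ne ℓ 0 with rfl | hl
  · simp
  have hlR : ((ℓ : ℝ)) ≠ 0 := Int.cast_ne_zero.mpr hl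
  have htpos : ∀ k, 0 < |(ℓ : ℝ)| * ε k := fun k => mul_pos (abs_pos.mpr hlR) (hpos k)
  have htmono : ∀ k, |(ℓ : ℝ)| * ε (k + 1) ≤ |(ℓ : ℝ)| * ε k := fun k =>
    mul_le_mul_of_nonneg_left (hmono k) (abs_nonneg _)
  have hterm : ∀ k : ℕ,
      |(Real.sin ((ℓ : ℝ) * ε k) / ((ℓ : ℝ) * ε k)) ^ 2
        - (Real.sin ((ℓ : ℝ) * ε (k + 1)) / ((ℓ : ℝ) * ε (k + 1))) ^ 2|
      ≤ VFun (|(ℓ : ℝ)| * ε k) - VFun (|(ℓ : ℝ)| * ε (k + 1)) := by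
    intro k
    have e : ∀ j : ℕ, (Real.sin ((ℓ : ℝ) * ε j) / ((ℓ : ℝ) * ε j)) ^ 2
        = gFun (|(ℓ : ℝ)| * ε j) := by
      intro j
      have h : |(ℓ : ℝ)| * ε j = |(ℓ : ℝ) * ε j| := by
        rw [abs_mul, abs_of_pos (hpos j)]
      rw [h, gFun_abs]
      rfl
    rw [e k, e (k + 1)]
    exact key (htpos (k + 1)) (htmono k)
  calc ∑ k ∈ Finset.range M,
        |(Real.sin ((ℓ : ℝ) * ε k) / ((ℓ : ℝ) * ε k)) ^ 2
          - (Real.sin ((ℓ : ℝ) * ε (k + 1)) / ((ℓ : ℝ) * ε (k + 1))) ^ 2|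
      ≤ ∑ k ∈ Finset.range M, (VFun (|(ℓ : ℝ)| * ε k) - VFun (|(ℓ : ℝ)| * ε (k + 1))) :=
        Finset.sum_le_sum fun k _ => hterm k
    _ = VFun (|(ℓ : ℝ)| * ε 0) - VFun (|(ℓ : ℝ)| * ε M) :=
        Finset.sum_range_sub' (fun k => VFun (|(ℓ : ℝ)| * ε k)) M
    _ ≤ 8 - 0 := by
        have := VFun_le (htpos 0)
        have := VFun_nonneg (htpos M)
        linarith
    _ = 8 := by norm_num
end
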